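/- Let T be a measure-preserving transformation of a probability space (Ω, 𝒜, μ̄) and h : Ω → [0,∞) a measurable function such that the positive part (h − h∘T)⁺ is μ̄-integrable. Then (1/n)·h(Tⁿω) → 0 for μ̄-almost every ω ∈ Ω. -/

import Mathlib

open Filter MeasureTheory Topology
open scoped ENNReal

namespace KWProof

noncomputable section

lemma le_of_forall_mul_add {X Y : ℝ≥0∞}
    (h : ∀ δ : ℝ≥0∞, 0 < δ → δ < ⊤ → X ≤ Y * (1 + δ) + δ) : X ≤ Y := by
  rcases eq_top_or_lt_top Y with hY | hY
  · simp [hY]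
  refine ENNReal.le_of_forall_pos_le_add fun ε hε _ => ?_
  have hY1 : Y + 1 ≠ ⊤ := by simp [hY.ne]
  have hY10 : Y + 1 ≠ 0 := by simp
  set δ : ℝ≥0∞ := (ε : ℝ≥0∞) / (Y + 1) with hδdef
  have hδ0 : 0 < δ := ENNReal.div_pos (by exact_mod_cast hε.ne') hY1
  have hδt : δ < ⊤ := ENNReal.div_lt_top (by simp) hY10
  have := h δ hδ0 hδt
  calc X ≤ Y * (1 + δ) + δ := this
    _ = Y + ((Y + 1) * δ) := by ring
    _ = Y + ε := by rw [hδdef, ENNReal.mul_div_cancel hY10 hY1]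

lemma limsup_le_mul_add (u v : ℕ → ℝ≥0∞) {c δ : ℝ≥0∞} (hc : c ≠ ⊤)
    (h : ∀ᶠ n in atTop, v n ≤ u n * c + δ) :
    limsup v atTop ≤ limsup u atTop * c + δ := by
  have hmono : Monotone (fun y : ℝ≥0∞ => y * c + δ) := fun a b hab => add_le_add_left (mul_le_mul_left hab c) δ
  have hcont : ContinuousAt (fun y : ℝ≥0∞ => y * c + δ) (limsup u atTop) :=
    ((ENNReal.continuous_mul_const hc).add continuous_const).continuousAt
  calc limsup v atTop ≤ limsup (fun n => u n * c + δ) atTop := limsup_le_limsup h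
    _ = limsup u atTop * c + δ :=
      (hmono.map_limsup_of_continuousAt u hcont).symm

lemma liminf_le_mul_add (u v : ℕ → ℝ≥0∞) {c δ : ℝ≥0∞} (hc : c ≠ ⊤)
    (h : ∀ᶠ n in atTop, v n ≤ u n * c + δ) :
    liminf v atTop ≤ liminf u atTop * c + δ := by
  have hmono : Monotone (fun y : ℝ≥0∞ => y * c + δ) := fun a b hab => add_le_add_left (mul_le_mul_left hab c) δ
  have hcont : ContinuousAt (fun y : ℝ≥0∞ => y * c + δ) (liminf u atTop) :=
    ((ENNReal.continuous_mul_const hc).add continuous_const).continuousAt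
  calc liminf v atTop ≤ liminf (fun n => u n * c + δ) atTop := liminf_le_liminf h
    _ = liminf u atTop * c + δ :=
      (hmono.map_liminf_of_continuousAt u hcont).symm


lemma squeeze_limsup_liminf (u v : ℕ → ℝ≥0∞)
    (h1 : ∀ δ : ℝ≥0∞, 0 < δ → δ < ⊤ → ∀ᶠ n in atTop, v n ≤ u n * (1 + δ) + δ)
    (h2 : ∀ δ : ℝ≥0∞, 0 < δ → δ < ⊤ → ∀ᶠ n in atTop, u n ≤ v n * (1 + δ) + δ) :
    limsup v atTop = limsup u atTop ∧ liminf v atTop = liminf u atTop := by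
  have hne : ∀ δ : ℝ≥0∞, δ < ⊤ → (1 + δ) ≠ ⊤ := fun δ hδ => by
    simp [hδ.ne]
  constructor
  · apply le_antisymm
    · exact le_of_forall_mul_add fun δ h0 ht =>
        limsup_le_mul_add u v (hne δ ht) (h1 δ h0 ht)
    · exact le_of_forall_mul_add fun δ h0 ht =>
        limsup_le_mul_add v u (hne δ ht) (h2 δ h0 ht)
  · apply le_antisymm
    · exact le_of_forall_mul_add fun δ h0 ht =>
        liminf_le_mul_add u v (hne δ ht) (h1 δ h0 ht)
    · exact le_of_forall_mul_add fun δ h0 ht =>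
        liminf_le_mul_add v u (hne δ ht) (h2 δ h0 ht)

variable {Ω : Type*}

/-- `ℝ≥0∞`-valued Birkhoff averages. -/
def eAv (T : Ω → Ω) (f : Ω → ℝ) (ω : Ω) (n : ℕ) : ℝ≥0∞ :=
  ENNReal.ofReal ((n : ℝ)⁻¹ * birkhoffSum T f n ω)

lemma birkhoffSum_nonneg {T : Ω → Ω} {f : Ω → ℝ} (hf : ∀ ω, 0 ≤ f ω) (n : ℕ) (ω : Ω) :
    0 ≤ birkhoffSum T f n ω :=
  Finset.sum_nonneg fun _ _ => hf _

lemma av_nonneg {T : Ω → Ω} {f : Ω → ℝ} (hf : ∀ ω, 0 ≤ f ω) (n : ℕ) (ω : Ω) :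
    0 ≤ (n : ℝ)⁻¹ * birkhoffSum T f n ω :=
  mul_nonneg (by positivity) (birkhoffSum_nonneg hf n ω)

/-- Exact invariance of the `limsup` and `liminf` of Birkhoff averages. -/
lemma eAv_comp (T : Ω → Ω) (f : Ω → ℝ) (hf : ∀ ω, 0 ≤ f ω) (ω : Ω) :
    limsup (eAv T f (T ω)) atTop = limsup (eAv T f ω) atTop ∧
    liminf (eAv T f (T ω)) atTop = liminf (eAv T f ω) atTop := by
  set s : ℕ → ℝ := fun n => birkhoffSum T f n ω with hs
  set t : ℕ → ℝ := fun n => birkhoffSum T f n (T ω) with ht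
  have hkey : ∀ n, s (n + 1) = f ω + t n := fun n => birkhoffSum_succ' T f n ω
  have hts : ∀ n, t n ≤ s (n + 1) := fun n => by rw [hkey n]; linarith [hf ω]
  have ht0 : ∀ n, 0 ≤ t n := fun n => birkhoffSum_nonneg hf n (T ω)
  set u : ℕ → ℝ≥0∞ := fun n => eAv T f ω (n + 1) with hu
  have main : limsup (eAv T f (T ω)) atTop = limsup u atTop ∧
      liminf (eAv T f (T ω)) atTop = liminf u atTop := by
    apply squeeze_limsup_liminf
    · intro δ h0 htop
      have hd : (0:ℝ) < δ.toReal := ENNReal.toReal_pos h0.ne' htop.ne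
      have hev : ∀ᶠ n : ℕ in atTop, ((n:ℝ)+1) * (n:ℝ)⁻¹ ≤ 1 + δ.toReal := by
        have h1 : Tendsto (fun n : ℕ => ((n:ℝ)+1) * (n:ℝ)⁻¹) atTop (𝓝 1) := by
          have h2 : Tendsto (fun n : ℕ => 1 + (n:ℝ)⁻¹) atTop (𝓝 (1 + 0)) :=
            tendsto_const_nhds.add (tendsto_inv_atTop_zero.comp tendsto_natCast_atTop_atTop)
          simp only [add_zero] at h2
          refine h2.congr' ?_
          filter_upwards [eventually_ge_atTop 1] with n hn
          have hn0 : (n:ℝ) ≠ 0 := by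
            have : (1:ℝ) ≤ (n:ℝ) := by exact_mod_cast hn
            linarith
          field_simp
        exact h1.eventually_le_const (by linarith)
      filter_upwards [hev, eventually_ge_atTop 1] with n hn hn1
      have hn0 : (0:ℝ) < (n:ℝ) := by exact_mod_cast hn1
      have hun : u n = ENNReal.ofReal (((n:ℝ)+1)⁻¹ * s (n+1)) := by
        have hc : ((n+1 : ℕ) : ℝ) = (n:ℝ)+1 := by push_cast; ring
        simp only [hu, eAv, hc, hs]
      have hreal : (n:ℝ)⁻¹ * t n ≤ (((n:ℝ)+1) * (n:ℝ)⁻¹) * (((n:ℝ)+1)⁻¹ * s (n+1)) := by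
        have hn10 : (0:ℝ) < (n:ℝ)+1 := by linarith
        rw [show (((n:ℝ)+1) * (n:ℝ)⁻¹) * (((n:ℝ)+1)⁻¹ * s (n+1)) = (n:ℝ)⁻¹ * s (n+1) by
          field_simp]
        exact mul_le_mul_of_nonneg_left (hts n) (by positivity)
      calc eAv T f (T ω) n = ENNReal.ofReal ((n:ℝ)⁻¹ * t n) := rfl
        _ ≤ ENNReal.ofReal ((((n:ℝ)+1) * (n:ℝ)⁻¹) * (((n:ℝ)+1)⁻¹ * s (n+1))) :=
            ENNReal.ofReal_le_ofReal hreal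
        _ = ENNReal.ofReal (((n:ℝ)+1) * (n:ℝ)⁻¹) * u n := by
            rw [ENNReal.ofReal_mul (by positivity), hun]
        _ ≤ (1 + δ) * u n := by
            gcongr
            calc ENNReal.ofReal (((n:ℝ)+1) * (n:ℝ)⁻¹) ≤ ENNReal.ofReal (1 + δ.toReal) :=
              ENNReal.ofReal_le_ofReal hn
              _ = 1 + δ := by
                rw [ENNReal.ofReal_add zero_le_one ENNReal.toReal_nonneg,
                  ENNReal.ofReal_one, ENNReal.ofReal_toReal htop.ne]
        _ = u n * (1 + δ) := mul_comm _ _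
        _ ≤ u n * (1 + δ) + δ := le_self_add
    · intro δ h0 htop
      have hd : (0:ℝ) < δ.toReal := ENNReal.toReal_pos h0.ne' htop.ne
      have hev : ∀ᶠ n : ℕ in atTop, f ω * ((n:ℝ)+1)⁻¹ ≤ δ.toReal := by
        have h1 : Tendsto (fun n : ℕ => f ω * ((n:ℝ)+1)⁻¹) atTop (𝓝 (f ω * 0)) := by
          refine tendsto_const_nhds.mul (tendsto_inv_atTop_zero.comp ?_)
          exact tendsto_atTop_add_const_right atTop 1 tendsto_natCast_atTop_atTop
        simp only [mul_zero] at h1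
        exact h1.eventually_le_const hd
      filter_upwards [hev, eventually_ge_atTop 1] with n hn hn1
      have hn0 : (0:ℝ) < (n:ℝ) := by exact_mod_cast hn1
      have hn10 : (0:ℝ) < (n:ℝ)+1 := by linarith
      have hun : u n = ENNReal.ofReal (((n:ℝ)+1)⁻¹ * s (n+1)) := by
        have hc : ((n+1 : ℕ) : ℝ) = (n:ℝ)+1 := by push_cast; ring
        simp only [hu, eAv, hc, hs]

      have hreal : ((n:ℝ)+1)⁻¹ * s (n+1) ≤ (n:ℝ)⁻¹ * t n + δ.toReal := by
        rw [hkey n, mul_add]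
        have e1 : ((n:ℝ)+1)⁻¹ * t n ≤ (n:ℝ)⁻¹ * t n :=
          mul_le_mul_of_nonneg_right (by
            apply inv_anti₀ hn0
            linarith) (ht0 n)
        have e2 : ((n:ℝ)+1)⁻¹ * f ω ≤ δ.toReal := by
          calc ((n:ℝ)+1)⁻¹ * f ω = f ω * ((n:ℝ)+1)⁻¹ := mul_comm _ _
            _ ≤ δ.toReal := hn
        linarith
      calc u n = ENNReal.ofReal (((n:ℝ)+1)⁻¹ * s (n+1)) := hun
        _ ≤ ENNReal.ofReal ((n:ℝ)⁻¹ * t n + δ.toReal) := ENNReal.ofReal_le_ofReal hreal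
        _ ≤ ENNReal.ofReal ((n:ℝ)⁻¹ * t n) + ENNReal.ofReal δ.toReal :=
            ENNReal.ofReal_add_le
        _ = eAv T f (T ω) n + δ := by rw [ENNReal.ofReal_toReal htop.ne]; rfl
        _ ≤ eAv T f (T ω) n * (1 + δ) + δ := by
            gcongr
            calc eAv T f (T ω) n = eAv T f (T ω) n * 1 := (mul_one _).symm
              _ ≤ eAv T f (T ω) n * (1 + δ) := by gcongr; exact le_self_add
  have hshift1 : limsup u atTop = limsup (eAv T f ω) atTop := by
    have := Filter.limsup_nat_add (eAv T f ω) 1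
    simpa [hu] using this
  have hshift2 : liminf u atTop = liminf (eAv T f ω) atTop := by
    have := Filter.liminf_nat_add (eAv T f ω) 1
    simpa [hu] using this
  exact ⟨main.1.trans hshift1, main.2.trans hshift2⟩

lemma iter_inv {T : Ω → Ω} {α : Type*} {g : Ω → α} (hg : ∀ ω, g (T ω) = g ω) :
    ∀ n ω, g (T^[n] ω) = g ω := by
  intro n
  induction n with
  | zero => simp
  | succ n IH =>
    intro ω
    rw [Function.iterate_succ_apply', hg, IH]

lemma cover_lower (T : Ω → Ω) (F : Ω → ℝ) (hF : ∀ ω, 0 ≤ F ω)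
    (ρ : Ω → ℝ) (hρ0 : ∀ ω, 0 ≤ ρ ω) (hρT : ∀ ω, ρ (T ω) = ρ ω) (N : ℕ)
    (hyp : ∀ ω, ∃ n, 1 ≤ n ∧ n ≤ N ∧ (n : ℝ) * ρ ω ≤ birkhoffSum T F n ω) :
    ∀ L ω, ((L - N : ℕ) : ℝ) * ρ ω ≤ birkhoffSum T F L ω := by
  intro L
  induction L using Nat.strong_induction_on with
  | _ L IH =>
    intro ω
    by_cases hL : L ≤ N
    · rw [Nat.sub_eq_zero_of_le hL]
      simpa using birkhoffSum_nonneg hF L ω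
    push_neg at hL
    obtain ⟨n, hn1, hnN, hns⟩ := hyp ω
    have hnL : n < L := lt_of_le_of_lt hnN hL
    have hdec : birkhoffSum T F L ω
        = birkhoffSum T F n ω + birkhoffSum T F (L - n) (T^[n] ω) := by
      rw [← birkhoffSum_add T F n (L - n) ω, Nat.add_sub_cancel' hnL.le]
    have hIH := IH (L - n) (by omega) (T^[n] ω)
    rw [iter_inv hρT n ω] at hIH
    have hcast : ((L - N : ℕ) : ℝ) ≤ (n : ℝ) + ((L - n - N : ℕ) : ℝ) := by
      have : (L - N : ℕ) ≤ n + (L - n - N) := by omega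
      exact_mod_cast this
    calc ((L - N : ℕ) : ℝ) * ρ ω ≤ ((n : ℝ) + ((L - n - N : ℕ) : ℝ)) * ρ ω :=
          mul_le_mul_of_nonneg_right hcast (hρ0 ω)
      _ = (n : ℝ) * ρ ω + ((L - n - N : ℕ) : ℝ) * ρ ω := by ring
      _ ≤ birkhoffSum T F n ω + birkhoffSum T F (L - n) (T^[n] ω) := add_le_add hns hIH
      _ = birkhoffSum T F L ω := hdec.symm

lemma cover_upper (T : Ω → Ω) (F : Ω → ℝ) (hF : ∀ ω, 0 ≤ F ω) {C : ℝ}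
    (hFC : ∀ ω, F ω ≤ C) (hC : 0 ≤ C)
    (ρ : Ω → ℝ) (hρ0 : ∀ ω, 0 ≤ ρ ω) (hρT : ∀ ω, ρ (T ω) = ρ ω) (N : ℕ)
    (hyp : ∀ ω, ∃ n, 1 ≤ n ∧ n ≤ N ∧ birkhoffSum T F n ω ≤ (n : ℝ) * ρ ω) :
    ∀ L ω, birkhoffSum T F L ω ≤ (L : ℝ) * ρ ω + (N : ℝ) * C := by
  intro L
  induction L using Nat.strong_induction_on with
  | _ L IH =>
    intro ω
    by_cases hL : L ≤ N
    · have h1 : birkhoffSum T F L ω ≤ (L : ℝ) * C := by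
        have := Finset.sum_le_card_nsmul (Finset.range L) (fun k => F (T^[k] ω)) C
          (fun k _ => hFC _)
        simpa [birkhoffSum, nsmul_eq_mul] using this
      have h2 : (L : ℝ) * C ≤ (N : ℝ) * C := by
        apply mul_le_mul_of_nonneg_right _ hC
        exact_mod_cast hL
      have h3 : (0:ℝ) ≤ (L : ℝ) * ρ ω := mul_nonneg (Nat.cast_nonneg L) (hρ0 ω)
      linarith
    push_neg at hL
    obtain ⟨n, hn1, hnN, hns⟩ := hyp ω
    have hnL : n < L := lt_of_le_of_lt hnN hL
    have hdec : birkhoffSum T F L ω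
        = birkhoffSum T F n ω + birkhoffSum T F (L - n) (T^[n] ω) := by
      rw [← birkhoffSum_add T F n (L - n) ω, Nat.add_sub_cancel' hnL.le]
    have hIH := IH (L - n) (by omega) (T^[n] ω)
    rw [iter_inv hρT n ω] at hIH
    have hcast : ((L - n : ℕ) : ℝ) = (L : ℝ) - (n : ℝ) := by
      exact_mod_cast Nat.cast_sub hnL.le
    calc birkhoffSum T F L ω
        = birkhoffSum T F n ω + birkhoffSum T F (L - n) (T^[n] ω) := hdec
      _ ≤ (n : ℝ) * ρ ω + (((L - n : ℕ) : ℝ) * ρ ω + (N : ℝ) * C) := add_le_add hns hIH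
      _ = ((n : ℝ) + ((L : ℝ) - (n : ℝ))) * ρ ω + (N : ℝ) * C := by rw [hcast]; ring
      _ = (L : ℝ) * ρ ω + (N : ℝ) * C := by ring

section Meas

variable {m : MeasurableSpace Ω} {μ : Measure Ω} {T : Ω → Ω}

lemma meas_birkhoff (hT : Measurable T) {f : Ω → ℝ} (hf : Measurable f) (n : ℕ) :
    Measurable (birkhoffSum T f n) := by
  apply Finset.measurable_sum
  intro k _
  exact hf.comp (hT.iterate k)

lemma meas_eAv (hT : Measurable T) {f : Ω → ℝ} (hf : Measurable f) (n : ℕ) :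
    Measurable (fun ω => eAv T f ω n) := by
  apply ENNReal.measurable_ofReal.comp
  exact (meas_birkhoff hT hf n).const_mul _

lemma meas_limsup_eAv (hT : Measurable T) {f : Ω → ℝ} (hf : Measurable f) :
    Measurable (fun ω => limsup (eAv T f ω) atTop) :=
  Measurable.limsup (meas_eAv hT hf)

lemma meas_liminf_eAv (hT : Measurable T) {f : Ω → ℝ} (hf : Measurable f) :
    Measurable (fun ω => liminf (eAv T f ω) atTop) :=
  Measurable.liminf (meas_eAv hT hf)

lemma lint_birkhoff (hT : MeasurePreserving T μ μ) {f : Ω → ℝ} (hf : Measurable f)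
    (hf0 : ∀ ω, 0 ≤ f ω) (n : ℕ) :
    ∫⁻ ω, ENNReal.ofReal (birkhoffSum T f n ω) ∂μ
      = n * ∫⁻ ω, ENNReal.ofReal (f ω) ∂μ := by
  have h1 : ∀ ω, ENNReal.ofReal (birkhoffSum T f n ω)
      = ∑ k ∈ Finset.range n, ENNReal.ofReal (f (T^[k] ω)) := fun ω =>
    ENNReal.ofReal_sum_of_nonneg (fun k _ => hf0 _)
  simp only [h1]
  rw [lintegral_finset_sum (f := fun k ω => ENNReal.ofReal (f (T^[k] ω))) (Finset.range n)
    (fun k _ => (ENNReal.measurable_ofReal.comp hf).comp (hT.measurable.iterate k))]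
  have h2 : ∀ k, ∫⁻ ω, ENNReal.ofReal (f (T^[k] ω)) ∂μ = ∫⁻ ω, ENNReal.ofReal (f ω) ∂μ :=
    fun k => (hT.iterate k).lintegral_comp (ENNReal.measurable_ofReal.comp hf)
  simp [h2, Finset.sum_const]

end Meas

lemma ennreal_le_of_forall_mul (a b c : ℝ≥0∞) (hc : c ≠ ⊤)
    (h : ∀ L : ℕ, 1 ≤ L → (L : ℝ≥0∞) * a ≤ (L : ℝ≥0∞) * b + c) : a ≤ b := by
  apply ENNReal.le_of_forall_pos_le_add
  intro ε hε hb
  have hε0 : (ε : ℝ≥0∞) ≠ 0 := by exact_mod_cast hε.ne'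
  obtain ⟨L, hL⟩ := ENNReal.exists_nat_gt (ENNReal.div_lt_top hc hε0).ne
  have hcL : c ≤ ((L + 1 : ℕ) : ℝ≥0∞) * ε := by
    have h1 : c / ε ≤ ((L + 1 : ℕ) : ℝ≥0∞) := by
      push_cast
      exact le_trans hL.le (by simp)
    calc c = c / ε * ε := (ENNReal.div_mul_cancel hε0 (by simp)).symm
      _ ≤ ((L + 1 : ℕ) : ℝ≥0∞) * ε := mul_le_mul_left h1 _
  have := h (L + 1) (by omega)
  have h2 : ((L+1:ℕ) : ℝ≥0∞) * a ≤ ((L+1:ℕ) : ℝ≥0∞) * (b + ε) := by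
    calc ((L+1:ℕ) : ℝ≥0∞) * a ≤ ((L+1:ℕ) : ℝ≥0∞) * b + c := this
      _ ≤ ((L+1:ℕ) : ℝ≥0∞) * b + ((L+1:ℕ) : ℝ≥0∞) * ε := add_le_add_right hcL _
      _ = ((L+1:ℕ) : ℝ≥0∞) * (b + ε) := by ring
  exact (ENNReal.mul_le_mul_iff_right (by exact_mod_cast Nat.succ_ne_zero L)
    (by simp)).mp h2

lemma ennreal_le_of_forall_sub_mul (a b : ℝ≥0∞) (N : ℕ) (hb : b ≠ ⊤)
    (h : ∀ L : ℕ, ((L - N : ℕ) : ℝ≥0∞) * a ≤ (L : ℝ≥0∞) * b) : a ≤ b := by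
  apply ennreal_le_of_forall_mul a b ((N : ℝ≥0∞) * b) (by
    exact ENNReal.mul_ne_top (by simp) hb)
  intro K hK
  have := h (K + N)
  have hKN : (K + N - N : ℕ) = K := by omega
  rw [hKN] at this
  calc (K : ℝ≥0∞) * a ≤ ((K + N : ℕ) : ℝ≥0∞) * b := this
    _ = (K : ℝ≥0∞) * b + (N : ℝ≥0∞) * b := by push_cast; ring

section KW

variable {m : MeasurableSpace Ω} {μ : Measure Ω} [IsProbabilityMeasure μ] {T : Ω → Ω}

lemma av_le_bound {T : Ω → Ω} {f : Ω → ℝ} {C : ℝ} (hfC : ∀ ω, f ω ≤ C) {n : ℕ}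
    (hn : 1 ≤ n) (ω : Ω) : (n:ℝ)⁻¹ * birkhoffSum T f n ω ≤ C := by
  have hn0 : (0:ℝ) < (n:ℝ) := by exact_mod_cast hn
  have hs : birkhoffSum T f n ω ≤ (n:ℝ) * C := by
    have := Finset.sum_le_card_nsmul (Finset.range n) (fun k => f (T^[k] ω)) C
      (fun k _ => hfC _)
    simpa [birkhoffSum, nsmul_eq_mul] using this
  calc (n:ℝ)⁻¹ * birkhoffSum T f n ω ≤ (n:ℝ)⁻¹ * ((n:ℝ) * C) := by
        apply mul_le_mul_of_nonneg_left hs (by positivity)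
    _ = C := by field_simp

/-- Katznelson-Weiss lower bound, bounded case. -/
lemma KW_lower (hT : MeasurePreserving T μ μ) {f : Ω → ℝ} (hf : Measurable f)
    (hf0 : ∀ ω, 0 ≤ f ω) {C : ℝ} (hfC : ∀ ω, f ω ≤ C) (hC : 0 ≤ C) :
    ∫⁻ ω, ENNReal.ofReal (f ω) ∂μ ≤ ∫⁻ ω, liminf (eAv T f ω) atTop ∂μ := by
  classical
  set Ψ : Ω → ℝ≥0∞ := fun ω => liminf (eAv T f ω) atTop with hΨdef
  have hΨm : Measurable Ψ := meas_liminf_eAv hT.measurable hf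
  have hΨle : ∀ ω, Ψ ω ≤ ENNReal.ofReal C := by
    intro ω
    have hev : ∀ᶠ n in atTop, eAv T f ω n ≤ ENNReal.ofReal C := by
      filter_upwards [eventually_ge_atTop 1] with n hn
      exact ENNReal.ofReal_le_ofReal (av_le_bound hfC hn ω)
    exact le_trans liminf_le_limsup (limsup_le_of_le (by isBoundedDefault) hev)
  have hΨfin : ∀ ω, Ψ ω ≠ ⊤ := fun ω => ((hΨle ω).trans_lt ENNReal.ofReal_lt_top).ne
  set ψ : Ω → ℝ := fun ω => (Ψ ω).toReal with hψdef
  have hψ0 : ∀ ω, 0 ≤ ψ ω := fun ω => ENNReal.toReal_nonneg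
  have heΨ : ∀ ω, ENNReal.ofReal (ψ ω) = Ψ ω := fun ω => ENNReal.ofReal_toReal (hΨfin ω)
  have hψT : ∀ ω, ψ (T ω) = ψ ω := fun ω => by
    simp only [hψdef, hΨdef, (eAv_comp T f hf0 ω).2]
  have hψm : Measurable ψ := hΨm.ennreal_toReal
  have hIntΨ : ∫⁻ ω, Ψ ω ∂μ ≤ ENNReal.ofReal C := by
    calc ∫⁻ ω, Ψ ω ∂μ ≤ ∫⁻ _, ENNReal.ofReal C ∂μ := lintegral_mono hΨle
      _ = ENNReal.ofReal C := by simp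
  have main : ∀ ε : ℝ, 0 < ε → ∀ η : ℝ≥0∞, 0 < η → η ≠ ⊤ →
      ∫⁻ ω, ENNReal.ofReal (f ω) ∂μ ≤ ∫⁻ ω, Ψ ω ∂μ + ENNReal.ofReal ε + η := by
    intro ε hε η hη hηt
    have hex : ∀ ω, ∃ n : ℕ, 1 ≤ n ∧ (n:ℝ)⁻¹ * birkhoffSum T f n ω ≤ ψ ω + ε := by
      intro ω
      have h1 : Ψ ω < ENNReal.ofReal (ψ ω + ε) := by
        rw [ENNReal.ofReal_add (hψ0 ω) hε.le, heΨ ω]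
        exact ENNReal.lt_add_right (hΨfin ω)
          (by simp [ENNReal.ofReal_eq_zero, not_le, hε])
      have h2 : ∃ᶠ n in atTop, eAv T f ω n < ENNReal.ofReal (ψ ω + ε) :=
        frequently_lt_of_liminf_lt (by isBoundedDefault) h1
      obtain ⟨n, hn1, hlt⟩ := frequently_atTop.mp h2 1
      refine ⟨n, hn1, ?_⟩
      by_contra hcon
      push_neg at hcon
      exact absurd hlt (not_lt.mpr (ENNReal.ofReal_le_ofReal hcon.le))
    set Dset : ℕ → Set Ω := fun N =>
      {ω | ∀ n, 1 ≤ n → n ≤ N → ψ ω + ε < (n:ℝ)⁻¹ * birkhoffSum T f n ω} with hDdef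
    have hDm : ∀ N, MeasurableSet (Dset N) := by
      intro N
      have hre : Dset N = ⋂ n ∈ Set.Icc 1 N,
          {ω | ψ ω + ε < (n:ℝ)⁻¹ * birkhoffSum T f n ω} := by
        ext ω
        simp [hDdef, Set.mem_Icc, and_imp]
      rw [hre]
      exact MeasurableSet.biInter (Set.to_countable _) fun n _ =>
        measurableSet_lt (hψm.add_const ε) ((meas_birkhoff hT.measurable hf n).const_mul _)
    have hDanti : Antitone Dset := by
      intro N M hNM ω hω n h1 h2
      exact hω n h1 (h2.trans hNM)
    have hDempty : ⋂ N, Dset N = ∅ := by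
      ext ω
      simp only [Set.mem_iInter, Set.mem_empty_iff_false, iff_false]
      intro hcon
      obtain ⟨n, hn1, hle⟩ := hex ω
      exact absurd (hcon n n hn1 le_rfl) (not_lt.mpr hle)
    have hDlim : Tendsto (fun N => μ (Dset N)) atTop (𝓝 0) := by
      have h0 : Tendsto (fun N => μ (Dset N)) atTop (𝓝 (μ (⋂ N, Dset N))) :=
        tendsto_measure_iInter_atTop (fun N => (hDm N).nullMeasurableSet) hDanti
          ⟨0, measure_ne_top μ _⟩
      rwa [hDempty, measure_empty] at h0
    have hCp : ENNReal.ofReal C + 1 ≠ 0 := by simp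
    have hCt : ENNReal.ofReal C + 1 ≠ ⊤ := by simp
    obtain ⟨N₀, hN₀⟩ := ENNReal.tendsto_atTop_zero.mp hDlim (η / (ENNReal.ofReal C + 1))
      (ENNReal.div_pos hη.ne' hCt)
    set N : ℕ := max N₀ 1 with hNdef
    have hN1 : 1 ≤ N := le_max_right _ _
    have hμD : ENNReal.ofReal C * μ (Dset N) ≤ η := by
      have h1 : μ (Dset N) ≤ η / (ENNReal.ofReal C + 1) := hN₀ N (le_max_left _ _)
      calc ENNReal.ofReal C * μ (Dset N)
          ≤ (ENNReal.ofReal C + 1) * (η / (ENNReal.ofReal C + 1)) := by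
            exact mul_le_mul' le_self_add h1
        _ = η := ENNReal.mul_div_cancel hCp hCt
    set F : Ω → ℝ := fun ω => if ω ∈ Dset N then 0 else f ω with hFdef
    have hFm : Measurable F := Measurable.ite (hDm N) measurable_const hf
    have hF0 : ∀ ω, 0 ≤ F ω := fun ω => by
      by_cases h : ω ∈ Dset N <;> simp [hFdef, h, hf0 ω]
    have hFf : ∀ ω, F ω ≤ f ω := fun ω => by
      by_cases h : ω ∈ Dset N <;> simp [hFdef, h, hf0 ω]
    have hFC : ∀ ω, F ω ≤ C := fun ω => (hFf ω).trans (hfC ω)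
    have hcov : ∀ L ω, birkhoffSum T F L ω ≤ (L : ℝ) * (ψ ω + ε) + (N : ℝ) * C := by
      apply cover_upper T F hF0 hFC hC _ (fun ω => add_nonneg (hψ0 ω) hε.le)
        (fun ω => by rw [hψT ω]) N
      intro ω
      by_cases hωD : ω ∈ Dset N
      · refine ⟨1, le_rfl, hN1, ?_⟩
        simp [birkhoffSum_one, hFdef, hωD, add_nonneg (hψ0 ω) hε.le]
      · have : ∃ n : ℕ, 1 ≤ n ∧ n ≤ N ∧ (n:ℝ)⁻¹ * birkhoffSum T f n ω ≤ ψ ω + ε := by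
          by_contra hcon
          push_neg at hcon
          exact hωD fun n h1 h2 => hcon n h1 h2
        obtain ⟨n, h1, h2, h3⟩ := this
        refine ⟨n, h1, h2, ?_⟩
        have hn0 : (0:ℝ) < (n:ℝ) := by exact_mod_cast h1
        have hFle : birkhoffSum T F n ω ≤ birkhoffSum T f n ω :=
          Finset.sum_le_sum fun k _ => hFf _
        calc birkhoffSum T F n ω ≤ birkhoffSum T f n ω := hFle
          _ = (n:ℝ) * ((n:ℝ)⁻¹ * birkhoffSum T f n ω) := by field_simp
          _ ≤ (n:ℝ) * (ψ ω + ε) := mul_le_mul_of_nonneg_left h3 hn0.le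
    -- integrate
    have hintF : ∫⁻ ω, ENNReal.ofReal (F ω) ∂μ ≤ ∫⁻ ω, Ψ ω ∂μ + ENNReal.ofReal ε := by
      apply ennreal_le_of_forall_mul _ _ ((N : ℝ≥0∞) * ENNReal.ofReal C)
        (ENNReal.mul_ne_top (by simp) ENNReal.ofReal_ne_top)
      intro L hL
      have hlhs : (L : ℝ≥0∞) * ∫⁻ ω, ENNReal.ofReal (F ω) ∂μ
          = ∫⁻ ω, ENNReal.ofReal (birkhoffSum T F L ω) ∂μ :=
        (lint_birkhoff hT hFm hF0 L).symm
      have hpt : ∀ ω, ENNReal.ofReal (birkhoffSum T F L ω)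
          ≤ (L : ℝ≥0∞) * (Ψ ω + ENNReal.ofReal ε) + (N : ℝ≥0∞) * ENNReal.ofReal C := by
        intro ω
        calc ENNReal.ofReal (birkhoffSum T F L ω)
            ≤ ENNReal.ofReal ((L : ℝ) * (ψ ω + ε) + (N : ℝ) * C) :=
              ENNReal.ofReal_le_ofReal (hcov L ω)
          _ = ENNReal.ofReal ((L : ℝ) * (ψ ω + ε)) + ENNReal.ofReal ((N : ℝ) * C) := by
              rw [ENNReal.ofReal_add (by positivity) (by positivity)]
              
          _ = (L : ℝ≥0∞) * (Ψ ω + ENNReal.ofReal ε) + (N : ℝ≥0∞) * ENNReal.ofReal C := by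
              rw [ENNReal.ofReal_mul (by positivity), ENNReal.ofReal_mul (by positivity),
                ENNReal.ofReal_natCast, ENNReal.ofReal_natCast,
                ENNReal.ofReal_add (hψ0 ω) hε.le, heΨ ω]
      calc (L : ℝ≥0∞) * ∫⁻ ω, ENNReal.ofReal (F ω) ∂μ
          = ∫⁻ ω, ENNReal.ofReal (birkhoffSum T F L ω) ∂μ := hlhs
        _ ≤ ∫⁻ ω, ((L : ℝ≥0∞) * (Ψ ω + ENNReal.ofReal ε)
              + (N : ℝ≥0∞) * ENNReal.ofReal C) ∂μ := lintegral_mono hpt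
        _ = (L : ℝ≥0∞) * (∫⁻ ω, Ψ ω ∂μ + ENNReal.ofReal ε)
              + (N : ℝ≥0∞) * ENNReal.ofReal C := by
            rw [lintegral_add_right _ measurable_const, lintegral_const_mul _ (f := fun ω => Ψ ω + ENNReal.ofReal ε)
              (hΨm.add measurable_const), lintegral_add_right _ measurable_const,
              lintegral_const]
            simp [measure_univ]
    have hsplit : ∫⁻ ω, ENNReal.ofReal (f ω) ∂μ
        ≤ ∫⁻ ω, ENNReal.ofReal (F ω) ∂μ + ENNReal.ofReal C * μ (Dset N) := by
      have hpt : ∀ ω, ENNReal.ofReal (f ω)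
          ≤ ENNReal.ofReal (F ω) + (Dset N).indicator (fun _ => ENNReal.ofReal C) ω := by
        intro ω
        by_cases h : ω ∈ Dset N
        · simp only [Set.indicator_of_mem h]
          exact le_add_left (ENNReal.ofReal_le_ofReal (hfC ω))
        · simp only [Set.indicator_of_notMem h, add_zero, hFdef, if_neg h]
          exact le_rfl
      calc ∫⁻ ω, ENNReal.ofReal (f ω) ∂μ
          ≤ ∫⁻ ω, (ENNReal.ofReal (F ω)
              + (Dset N).indicator (fun _ => ENNReal.ofReal C) ω) ∂μ := lintegral_mono hpt
        _ = ∫⁻ ω, ENNReal.ofReal (F ω) ∂μ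
              + ∫⁻ ω, (Dset N).indicator (fun _ => ENNReal.ofReal C) ω ∂μ :=
            lintegral_add_left (ENNReal.measurable_ofReal.comp hFm) _
        _ = ∫⁻ ω, ENNReal.ofReal (F ω) ∂μ + ENNReal.ofReal C * μ (Dset N) := by
            rw [lintegral_indicator (hDm N), setLIntegral_const]
    calc ∫⁻ ω, ENNReal.ofReal (f ω) ∂μ
        ≤ ∫⁻ ω, ENNReal.ofReal (F ω) ∂μ + ENNReal.ofReal C * μ (Dset N) := hsplit
      _ ≤ (∫⁻ ω, Ψ ω ∂μ + ENNReal.ofReal ε) + η := add_le_add hintF hμD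
      _ = ∫⁻ ω, Ψ ω ∂μ + ENNReal.ofReal ε + η := rfl
  -- conclude
  apply ENNReal.le_of_forall_pos_le_add
  intro ε' hε' hfin
  have hε'0 : (0:ℝ) < (ε' : ℝ) / 2 := by positivity
  have hη : (0:ℝ≥0∞) < (ε' : ℝ≥0∞) / 2 :=
    ENNReal.div_pos (by exact_mod_cast hε'.ne') (by simp)
  have := main ((ε' : ℝ) / 2) hε'0 ((ε' : ℝ≥0∞) / 2) hη
    (by simp [ENNReal.div_eq_top])
  have heq : ENNReal.ofReal ((ε' : ℝ) / 2) = (ε' : ℝ≥0∞) / 2 := by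
    rw [ENNReal.ofReal_div_of_pos (by norm_num)]
    simp [ENNReal.ofReal_coe_nnreal]
  rw [heq] at this
  calc ∫⁻ ω, ENNReal.ofReal (f ω) ∂μ
      ≤ ∫⁻ ω, Ψ ω ∂μ + (ε' : ℝ≥0∞) / 2 + (ε' : ℝ≥0∞) / 2 := this
    _ = ∫⁻ ω, Ψ ω ∂μ + ε' := by rw [add_assoc, ENNReal.add_halves]


/-- Katznelson-Weiss upper bound, general nonnegative case. -/
lemma KW_upper (hT : MeasurePreserving T μ μ) {f : Ω → ℝ} (hf : Measurable f)
    (hf0 : ∀ ω, 0 ≤ f ω) :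
    ∫⁻ ω, limsup (eAv T f ω) atTop ∂μ ≤ ∫⁻ ω, ENNReal.ofReal (f ω) ∂μ := by
  classical
  by_cases hfin : ∫⁻ ω, ENNReal.ofReal (f ω) ∂μ = ⊤
  · rw [hfin]; exact le_top
  set Φ : Ω → ℝ≥0∞ := fun ω => limsup (eAv T f ω) atTop with hΦdef
  have hΦm : Measurable Φ := meas_limsup_eAv hT.measurable hf
  have hΦT : ∀ ω, Φ (T ω) = Φ ω := fun ω => (eAv_comp T f hf0 ω).1
  have main : ∀ M : ℕ,
      ∫⁻ ω, min (Φ ω) (M : ℝ≥0∞) ∂μ ≤ ∫⁻ ω, ENNReal.ofReal (f ω) ∂μ := by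
    intro M
    set r : Ω → ℝ := fun ω => (min (Φ ω) (M : ℝ≥0∞)).toReal with hrdef
    have hminfin : ∀ ω, min (Φ ω) (M : ℝ≥0∞) ≠ ⊤ :=
      fun ω => ((min_le_right _ _).trans_lt (by simp)).ne
    have hr0 : ∀ ω, 0 ≤ r ω := fun ω => ENNReal.toReal_nonneg
    have hrM : ∀ ω, r ω ≤ (M : ℝ) := fun ω => by
      rw [hrdef]
      calc (min (Φ ω) (M : ℝ≥0∞)).toReal ≤ ((M : ℝ≥0∞)).toReal :=
          ENNReal.toReal_mono (by simp) (min_le_right _ _)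
        _ = (M : ℝ) := by simp
    have her : ∀ ω, ENNReal.ofReal (r ω) = min (Φ ω) (M : ℝ≥0∞) := fun ω =>
      ENNReal.ofReal_toReal (hminfin ω)
    have hrT : ∀ ω, r (T ω) = r ω := fun ω => by simp only [hrdef, hΦT ω]
    have hrm : Measurable r := (hΦm.min measurable_const).ennreal_toReal
    have main2 : ∀ ε : ℝ, 0 < ε → ∀ η : ℝ≥0∞, 0 < η → η ≠ ⊤ →
        ∫⁻ ω, min (Φ ω) (M : ℝ≥0∞) ∂μ
          ≤ ∫⁻ ω, ENNReal.ofReal (f ω) ∂μ + ENNReal.ofReal ε + η := by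
      intro ε hε η hη hηt
      have hex : ∀ ω, ∃ n : ℕ, 1 ≤ n ∧ r ω - ε ≤ (n:ℝ)⁻¹ * birkhoffSum T f n ω := by
        intro ω
        by_cases hcase : r ω ≤ ε
        · refine ⟨1, le_rfl, ?_⟩
          have : (0:ℝ) ≤ (1:ℝ)⁻¹ * birkhoffSum T f 1 ω := by
            simpa [birkhoffSum_one] using hf0 ω
          linarith
        · push_neg at hcase
          have hrpos : 0 < r ω := lt_trans hε hcase
          have hstep : ENNReal.ofReal (r ω - ε) < ENNReal.ofReal (r ω) := by
            rw [ENNReal.ofReal_lt_ofReal_iff hrpos]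
            linarith
          have h1 : ENNReal.ofReal (r ω - ε) < Φ ω := by
            calc ENNReal.ofReal (r ω - ε) < ENNReal.ofReal (r ω) := hstep
              _ = min (Φ ω) (M : ℝ≥0∞) := her ω
              _ ≤ Φ ω := min_le_left _ _
          have h2 : ∃ᶠ n in atTop, ENNReal.ofReal (r ω - ε) < eAv T f ω n :=
            frequently_lt_of_lt_limsup (by isBoundedDefault) h1
          obtain ⟨n, hn1, hlt⟩ := frequently_atTop.mp h2 1
          refine ⟨n, hn1, ?_⟩
          by_contra hcon
          push_neg at hcon
          exact absurd hlt (not_lt.mpr (ENNReal.ofReal_le_ofReal hcon.le))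
      set Dset : ℕ → Set Ω := fun N =>
        {ω | ∀ n : ℕ, 1 ≤ n → n ≤ N → (n:ℝ)⁻¹ * birkhoffSum T f n ω < r ω - ε} with hDdef
      have hDm : ∀ N, MeasurableSet (Dset N) := by
        intro N
        have hre : Dset N = ⋂ n ∈ Set.Icc 1 N,
            {ω | (n:ℝ)⁻¹ * birkhoffSum T f n ω < r ω - ε} := by
          ext ω
          simp [hDdef, Set.mem_Icc, and_imp]
        rw [hre]
        exact MeasurableSet.biInter (Set.to_countable _) fun n _ =>
          measurableSet_lt ((meas_birkhoff hT.measurable hf n).const_mul _)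
            (hrm.add_const (-ε))
      have hDanti : Antitone Dset := by
        intro N M' hNM ω hω n h1 h2
        exact hω n h1 (h2.trans hNM)
      have hDempty : ⋂ N, Dset N = ∅ := by
        ext ω
        simp only [Set.mem_iInter, Set.mem_empty_iff_false, iff_false]
        intro hcon
        obtain ⟨n, hn1, hle⟩ := hex ω
        exact absurd (hcon n n hn1 le_rfl) (not_lt.mpr hle)
      have hDlim : Tendsto (fun N => μ (Dset N)) atTop (𝓝 0) := by
        have h0 : Tendsto (fun N => μ (Dset N)) atTop (𝓝 (μ (⋂ N, Dset N))) :=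
          tendsto_measure_iInter_atTop (fun N => (hDm N).nullMeasurableSet) hDanti
            ⟨0, measure_ne_top μ _⟩
        rwa [hDempty, measure_empty] at h0
      have hMp : (M : ℝ≥0∞) + 1 ≠ 0 := by simp
      have hMt : (M : ℝ≥0∞) + 1 ≠ ⊤ := by simp
      obtain ⟨N₀, hN₀⟩ := ENNReal.tendsto_atTop_zero.mp hDlim (η / ((M : ℝ≥0∞) + 1))
        (ENNReal.div_pos hη.ne' hMt)
      set N : ℕ := max N₀ 1 with hNdef
      have hN1 : 1 ≤ N := le_max_right _ _
      have hμD : (M : ℝ≥0∞) * μ (Dset N) ≤ η := by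
        have h1 : μ (Dset N) ≤ η / ((M : ℝ≥0∞) + 1) := hN₀ N (le_max_left _ _)
        calc (M : ℝ≥0∞) * μ (Dset N)
            ≤ ((M : ℝ≥0∞) + 1) * (η / ((M : ℝ≥0∞) + 1)) := mul_le_mul' le_self_add h1
          _ = η := ENNReal.mul_div_cancel hMp hMt
      set F : Ω → ℝ := fun ω => f ω + (if ω ∈ Dset N then (M:ℝ) else 0) with hFdef
      have hFm : Measurable F := hf.add (Measurable.ite (hDm N) measurable_const
        measurable_const)
      have hF0 : ∀ ω, 0 ≤ F ω := fun ω => by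
        by_cases h : ω ∈ Dset N <;> simp [hFdef, h, hf0 ω] <;>
          linarith [hf0 ω, Nat.cast_nonneg (α := ℝ) M]
      have hFf : ∀ ω, f ω ≤ F ω := fun ω => by
        by_cases h : ω ∈ Dset N <;> simp [hFdef, h] <;>
          linarith [Nat.cast_nonneg (α := ℝ) M]
      set ρ : Ω → ℝ := fun ω => max (r ω - ε) 0 with hρdef
      have hρ0 : ∀ ω, 0 ≤ ρ ω := fun ω => le_max_right _ _
      have hρT : ∀ ω, ρ (T ω) = ρ ω := fun ω => by simp only [hρdef, hrT ω]
      have hρm : Measurable ρ := (hrm.add_const (-ε)).max measurable_const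
      have hρle : ∀ ω {n : ℕ}, 1 ≤ n → r ω - ε ≤ (n:ℝ)⁻¹ * birkhoffSum T f n ω →
          (n : ℝ) * ρ ω ≤ birkhoffSum T f n ω := by
        intro ω n hn hle
        have hn0 : (0:ℝ) < (n:ℝ) := by exact_mod_cast hn
        rcases le_total (r ω - ε) 0 with h | h
        · rw [hρdef]
          simp only [max_eq_right h]
          simpa using birkhoffSum_nonneg hf0 n ω
        · rw [hρdef]
          simp only [max_eq_left h]
          calc (n:ℝ) * (r ω - ε) ≤ (n:ℝ) * ((n:ℝ)⁻¹ * birkhoffSum T f n ω) :=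
              mul_le_mul_of_nonneg_left hle hn0.le
            _ = birkhoffSum T f n ω := by field_simp
      have hcov : ∀ L ω, ((L - N : ℕ) : ℝ) * ρ ω ≤ birkhoffSum T F L ω := by
        apply cover_lower T F hF0 ρ hρ0 hρT N
        intro ω
        by_cases hωD : ω ∈ Dset N
        · refine ⟨1, le_rfl, hN1, ?_⟩
          have h1 : birkhoffSum T F 1 ω = f ω + (M:ℝ) := by
            simp [birkhoffSum_one, hFdef, hωD]
          rw [h1]
          have := hrM ω
          have := hf0 ω
          have := hρ0 ω
          have hρr : ρ ω ≤ max (r ω) 0 := by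
            apply max_le_max _ le_rfl
            linarith
          have : ρ ω ≤ (M:ℝ) := by
            rcases le_total (r ω - ε) 0 with h | h
            · rw [hρdef]; simp only [max_eq_right h]; positivity
            · rw [hρdef]; simp only [max_eq_left h]; linarith [hrM ω]
          simpa using by linarith
        · have hthis : ∃ n : ℕ, 1 ≤ n ∧ n ≤ N ∧
              r ω - ε ≤ (n:ℝ)⁻¹ * birkhoffSum T f n ω := by
            by_contra hcon
            push_neg at hcon
            exact hωD fun n h1 h2 => hcon n h1 h2
          obtain ⟨n, h1, h2, h3⟩ := hthis
          refine ⟨n, h1, h2, ?_⟩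
          calc (n:ℝ) * ρ ω ≤ birkhoffSum T f n ω := hρle ω h1 h3
            _ ≤ birkhoffSum T F n ω := Finset.sum_le_sum fun k _ => hFf _
      -- integrate
      have hintF : ∫⁻ ω, ENNReal.ofReal (F ω) ∂μ
          ≤ ∫⁻ ω, ENNReal.ofReal (f ω) ∂μ + η := by
        have hpt : ∀ ω, ENNReal.ofReal (F ω)
            = ENNReal.ofReal (f ω) + (Dset N).indicator (fun _ => (M:ℝ≥0∞)) ω := by
          intro ω
          by_cases h : ω ∈ Dset N
          · simp [hFdef, h, Set.indicator_of_mem h,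
              ENNReal.ofReal_add (hf0 ω) (by positivity : (0:ℝ) ≤ (M:ℝ)),
              ENNReal.ofReal_natCast]
          · simp [hFdef, h, Set.indicator_of_notMem h]
        calc ∫⁻ ω, ENNReal.ofReal (F ω) ∂μ
            = ∫⁻ ω, (ENNReal.ofReal (f ω)
                + (Dset N).indicator (fun _ => (M:ℝ≥0∞)) ω) ∂μ := by
              simp only [hpt]
          _ = ∫⁻ ω, ENNReal.ofReal (f ω) ∂μ
                + ∫⁻ ω, (Dset N).indicator (fun _ => (M:ℝ≥0∞)) ω ∂μ :=
              lintegral_add_left (ENNReal.measurable_ofReal.comp hf) _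
          _ = ∫⁻ ω, ENNReal.ofReal (f ω) ∂μ + (M:ℝ≥0∞) * μ (Dset N) := by
              rw [lintegral_indicator (hDm N), setLIntegral_const]
          _ ≤ ∫⁻ ω, ENNReal.ofReal (f ω) ∂μ + η := add_le_add_right hμD _
      have hb : ∫⁻ ω, ENNReal.ofReal (f ω) ∂μ + η ≠ ⊤ :=
        ENNReal.add_ne_top.mpr ⟨hfin, hηt⟩
      have hρint : ∫⁻ ω, ENNReal.ofReal (ρ ω) ∂μ
          ≤ ∫⁻ ω, ENNReal.ofReal (f ω) ∂μ + η := by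
        apply ennreal_le_of_forall_sub_mul _ _ N hb
        intro L
        calc ((L - N : ℕ) : ℝ≥0∞) * ∫⁻ ω, ENNReal.ofReal (ρ ω) ∂μ
            = ∫⁻ ω, ((L - N : ℕ) : ℝ≥0∞) * ENNReal.ofReal (ρ ω) ∂μ :=
              (lintegral_const_mul _ (ENNReal.measurable_ofReal.comp hρm)).symm
          _ ≤ ∫⁻ ω, ENNReal.ofReal (birkhoffSum T F L ω) ∂μ := by
              apply lintegral_mono
              intro ω
              calc ((L - N : ℕ) : ℝ≥0∞) * ENNReal.ofReal (ρ ω)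
                  = ENNReal.ofReal (((L - N : ℕ) : ℝ) * ρ ω) := by
                    rw [ENNReal.ofReal_mul (by positivity), ENNReal.ofReal_natCast]
                _ ≤ ENNReal.ofReal (birkhoffSum T F L ω) :=
                    ENNReal.ofReal_le_ofReal (hcov L ω)
          _ = (L : ℝ≥0∞) * ∫⁻ ω, ENNReal.ofReal (F ω) ∂μ := lint_birkhoff hT hFm hF0 L
          _ ≤ (L : ℝ≥0∞) * (∫⁻ ω, ENNReal.ofReal (f ω) ∂μ + η) :=
              mul_le_mul_right hintF _
      calc ∫⁻ ω, min (Φ ω) (M : ℝ≥0∞) ∂μ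
          = ∫⁻ ω, ENNReal.ofReal (r ω) ∂μ := by simp only [her]
        _ ≤ ∫⁻ ω, (ENNReal.ofReal (ρ ω) + ENNReal.ofReal ε) ∂μ := by
            apply lintegral_mono
            intro ω
            calc ENNReal.ofReal (r ω) ≤ ENNReal.ofReal (ρ ω + ε) :=
                ENNReal.ofReal_le_ofReal (by
                  have : r ω - ε ≤ ρ ω := le_max_left _ _
                  linarith)
              _ = ENNReal.ofReal (ρ ω) + ENNReal.ofReal ε := by
                  rw [ENNReal.ofReal_add (hρ0 ω) hε.le]
        _ = ∫⁻ ω, ENNReal.ofReal (ρ ω) ∂μ + ENNReal.ofReal ε := by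
            rw [lintegral_add_right _ measurable_const, lintegral_const]
            simp [measure_univ]
        _ ≤ ∫⁻ ω, ENNReal.ofReal (f ω) ∂μ + η + ENNReal.ofReal ε :=
            add_le_add_left hρint _
        _ = ∫⁻ ω, ENNReal.ofReal (f ω) ∂μ + ENNReal.ofReal ε + η := by ring
    -- conclude over ε, η
    apply ENNReal.le_of_forall_pos_le_add
    intro ε' hε' hfin2
    have hε'0 : (0:ℝ) < (ε' : ℝ) / 2 := by positivity
    have hη : (0:ℝ≥0∞) < (ε' : ℝ≥0∞) / 2 :=
      ENNReal.div_pos (by exact_mod_cast hε'.ne') (by simp)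
    have := main2 ((ε' : ℝ) / 2) hε'0 ((ε' : ℝ≥0∞) / 2) hη (by simp [ENNReal.div_eq_top])
    have heq : ENNReal.ofReal ((ε' : ℝ) / 2) = (ε' : ℝ≥0∞) / 2 := by
      rw [ENNReal.ofReal_div_of_pos (by norm_num)]
      simp [ENNReal.ofReal_coe_nnreal]
    rw [heq] at this
    calc ∫⁻ ω, min (Φ ω) (M : ℝ≥0∞) ∂μ
        ≤ ∫⁻ ω, ENNReal.ofReal (f ω) ∂μ + (ε' : ℝ≥0∞) / 2 + (ε' : ℝ≥0∞) / 2 := this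
      _ = ∫⁻ ω, ENNReal.ofReal (f ω) ∂μ + ε' := by rw [add_assoc, ENNReal.add_halves]
  -- sup over M
  have hsup : ∀ ω, ⨆ M : ℕ, min (Φ ω) (M : ℝ≥0∞) = Φ ω := by
    intro ω
    apply le_antisymm (iSup_le fun M => min_le_left _ _)
    rcases eq_top_or_lt_top (Φ ω) with h | h
    · rw [h]
      have h2 : ∀ M : ℕ, (M : ℝ≥0∞) ≤ ⨆ M' : ℕ, min ((⊤:ℝ≥0∞)) (M' : ℝ≥0∞) := by
        intro M
        calc (M : ℝ≥0∞) = min ⊤ (M : ℝ≥0∞) := by simp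
          _ ≤ _ := le_iSup (fun M' : ℕ => min (⊤:ℝ≥0∞) (M' : ℝ≥0∞)) M
      calc (⊤:ℝ≥0∞) = ⨆ M : ℕ, (M : ℝ≥0∞) := ENNReal.iSup_natCast.symm
        _ ≤ ⨆ M' : ℕ, min ((⊤:ℝ≥0∞)) (M' : ℝ≥0∞) := iSup_le h2
    · obtain ⟨M, hM⟩ := ENNReal.exists_nat_gt h.ne
      calc Φ ω = min (Φ ω) (M : ℝ≥0∞) := (min_eq_left hM.le).symm
        _ ≤ _ := le_iSup (fun M' : ℕ => min (Φ ω) (M' : ℝ≥0∞)) M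
  calc ∫⁻ ω, Φ ω ∂μ = ∫⁻ ω, ⨆ M : ℕ, min (Φ ω) (M : ℝ≥0∞) ∂μ := by
        simp only [hsup]
    _ = ⨆ M : ℕ, ∫⁻ ω, min (Φ ω) (M : ℝ≥0∞) ∂μ :=
        lintegral_iSup (fun M => hΦm.min measurable_const)
          (fun M M' hMM' ω => min_le_min le_rfl (by exact_mod_cast hMM'))
    _ ≤ ∫⁻ ω, ENNReal.ofReal (f ω) ∂μ := iSup_le main


end KW

lemma limsup_add_le' (x y : ℕ → ℝ≥0∞) :
    limsup (fun n => x n + y n) atTop ≤ limsup x atTop + limsup y atTop := by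
  rcases eq_top_or_lt_top (limsup x atTop) with hx | hx
  · rw [hx]; simp [top_add]
  rcases eq_top_or_lt_top (limsup y atTop) with hy | hy
  · rw [hy]; simp [add_top]
  apply ENNReal.le_of_forall_pos_le_add
  intro ε hε _
  have hε2 : (0:ℝ≥0∞) < (ε : ℝ≥0∞) / 2 := ENNReal.div_pos (by exact_mod_cast hε.ne') (by simp)
  have hevx : ∀ᶠ n in atTop, x n < limsup x atTop + (ε : ℝ≥0∞) / 2 :=
    eventually_lt_of_limsup_lt (ENNReal.lt_add_right hx.ne hε2.ne')
  have hevy : ∀ᶠ n in atTop, y n < limsup y atTop + (ε : ℝ≥0∞) / 2 :=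
    eventually_lt_of_limsup_lt (ENNReal.lt_add_right hy.ne hε2.ne')
  have hev : ∀ᶠ n in atTop, x n + y n
      ≤ limsup x atTop + limsup y atTop + (ε : ℝ≥0∞) := by
    filter_upwards [hevx, hevy] with n h1 h2
    calc x n + y n ≤ (limsup x atTop + (ε : ℝ≥0∞)/2) + (limsup y atTop + (ε : ℝ≥0∞)/2) :=
        add_le_add h1.le h2.le
      _ = limsup x atTop + limsup y atTop + ((ε:ℝ≥0∞)/2 + (ε:ℝ≥0∞)/2) := by ring
      _ = limsup x atTop + limsup y atTop + (ε : ℝ≥0∞) := by rw [ENNReal.add_halves]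
  exact limsup_le_of_le (by isBoundedDefault) hev

section Conv

variable {m : MeasurableSpace Ω} {μ : Measure Ω} [IsProbabilityMeasure μ] {T : Ω → Ω}

lemma ae_eq_of_lintegral_le {X Y : Ω → ℝ≥0∞} (hX : Measurable X) (hY : Measurable Y)
    (hYX : ∀ ω, Y ω ≤ X ω) (hle : ∫⁻ ω, X ω ∂μ ≤ ∫⁻ ω, Y ω ∂μ)
    (hfin : ∫⁻ ω, Y ω ∂μ ≠ ⊤) : ∀ᵐ ω ∂μ, X ω = Y ω := by
  have hsub : ∫⁻ ω, (X ω - Y ω) ∂μ = ∫⁻ ω, X ω ∂μ - ∫⁻ ω, Y ω ∂μ :=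
    lintegral_sub hY hfin (Filter.Eventually.of_forall hYX)
  have hzero : ∫⁻ ω, (X ω - Y ω) ∂μ = 0 := by
    rw [hsub]
    exact tsub_eq_zero_of_le hle
  have := (lintegral_eq_zero_iff (hX.sub hY)).mp hzero
  filter_upwards [this] with ω hω
  have : X ω - Y ω = 0 := hω
  exact le_antisymm (tsub_eq_zero_iff_le.mp this) (hYX ω)

/-- a.e. convergence of Birkhoff averages : bounded case. -/
lemma conv_bounded (hT : MeasurePreserving T μ μ) {f : Ω → ℝ} (hf : Measurable f)
    (hf0 : ∀ ω, 0 ≤ f ω) {C : ℝ} (hfC : ∀ ω, f ω ≤ C) (hC : 0 ≤ C) :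
    ∀ᵐ ω ∂μ, limsup (eAv T f ω) atTop = liminf (eAv T f ω) atTop := by
  have hΨle : ∀ ω, liminf (eAv T f ω) atTop ≤ ENNReal.ofReal C := by
    intro ω
    have hev : ∀ᶠ n in atTop, eAv T f ω n ≤ ENNReal.ofReal C := by
      filter_upwards [eventually_ge_atTop 1] with n hn
      exact ENNReal.ofReal_le_ofReal (av_le_bound hfC hn ω)
    exact le_trans liminf_le_limsup (limsup_le_of_le (by isBoundedDefault) hev)
  have hfin : ∫⁻ ω, liminf (eAv T f ω) atTop ∂μ ≠ ⊤ := by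
    apply ne_top_of_le_ne_top (b := ENNReal.ofReal C)
    · exact ENNReal.ofReal_ne_top
    · calc ∫⁻ ω, liminf (eAv T f ω) atTop ∂μ ≤ ∫⁻ _, ENNReal.ofReal C ∂μ :=
          lintegral_mono hΨle
        _ = ENNReal.ofReal C := by simp
  apply ae_eq_of_lintegral_le (meas_limsup_eAv hT.measurable hf)
    (meas_liminf_eAv hT.measurable hf) (fun ω => liminf_le_limsup) _ hfin
  calc ∫⁻ ω, limsup (eAv T f ω) atTop ∂μ ≤ ∫⁻ ω, ENNReal.ofReal (f ω) ∂μ :=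
      KW_upper hT hf hf0
    _ ≤ ∫⁻ ω, liminf (eAv T f ω) atTop ∂μ := KW_lower hT hf hf0 hfC hC

lemma eAv_split {f g : Ω → ℝ} (hf0 : ∀ ω, 0 ≤ f ω) (hg0 : ∀ ω, 0 ≤ g ω) (ω : Ω) :
    ∀ n, eAv T (fun x => f x + g x) ω n = eAv T f ω n + eAv T g ω n := by
  intro n
  have hsum : birkhoffSum T (fun x => f x + g x) n ω
      = birkhoffSum T f n ω + birkhoffSum T g n ω := by
    simp only [birkhoffSum]
    rw [← Finset.sum_add_distrib]
  simp only [eAv, hsum, mul_add]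
  rw [ENNReal.ofReal_add (av_nonneg hf0 n ω) (av_nonneg hg0 n ω)]

/-- a.e. convergence of Birkhoff averages : integrable case. -/
lemma conv_L1 (hT : MeasurePreserving T μ μ) {w : Ω → ℝ} (hw : Measurable w)
    (hw0 : ∀ ω, 0 ≤ w ω) (hwint : ∫⁻ ω, ENNReal.ofReal (w ω) ∂μ ≠ ⊤) :
    ∀ᵐ ω ∂μ, limsup (eAv T w ω) atTop = liminf (eAv T w ω) atTop ∧
      limsup (eAv T w ω) atTop ≠ ⊤ := by
  classical
  set wM : ℕ → Ω → ℝ := fun M ω => min (w ω) (M : ℝ) with hwMdef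
  set rM : ℕ → Ω → ℝ := fun M ω => w ω - min (w ω) (M : ℝ) with hrMdef
  have hwMm : ∀ M, Measurable (wM M) := fun M => hw.min measurable_const
  have hrMm : ∀ M, Measurable (rM M) := fun M => hw.sub (hwMm M)
  have hwM0 : ∀ M ω, 0 ≤ wM M ω := fun M ω => le_min (hw0 ω) (by positivity)
  have hrM0 : ∀ M ω, 0 ≤ rM M ω := fun M ω => by
    simp only [hrMdef, sub_nonneg]
    exact min_le_left _ _
  have hwMC : ∀ M ω, wM M ω ≤ (M:ℝ) := fun M ω => min_le_right _ _
  have hsplit : ∀ M ω n, eAv T w ω n = eAv T (wM M) ω n + eAv T (rM M) ω n := by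
    intro M ω n
    have : w = fun x => wM M x + rM M x := by
      funext x
      simp [hwMdef, hrMdef]
    conv_lhs => rw [this]
    exact eAv_split (hwM0 M) (hrM0 M) ω n
  -- integral of remainder tends to 0
  have hrint : Tendsto (fun M => ∫⁻ ω, ENNReal.ofReal (rM M ω) ∂μ) atTop (𝓝 0) := by
    have h0 : (0:ℝ≥0∞) = ∫⁻ ω, (0:ℝ≥0∞) ∂μ := by simp
    rw [h0]
    apply tendsto_lintegral_of_dominated_convergence (fun ω => ENNReal.ofReal (w ω))
      (fun M => ENNReal.measurable_ofReal.comp (hrMm M)) _ hwint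
    · apply Filter.Eventually.of_forall
      intro ω
      have : Tendsto (fun M : ℕ => ENNReal.ofReal (rM M ω)) atTop (𝓝 (ENNReal.ofReal 0)) := by
        apply Tendsto.congr' _ tendsto_const_nhds
        filter_upwards [eventually_ge_atTop (Nat.ceil (w ω))] with M hM
        have hw_le : w ω ≤ (M : ℝ) := le_trans (Nat.le_ceil _) (by exact_mod_cast hM)
        simp [hrMdef, min_eq_left hw_le]
      simpa using this
    · intro M
      apply Filter.Eventually.of_forall
      intro ω
      apply ENNReal.ofReal_le_ofReal
      have : 0 ≤ min (w ω) (M:ℝ) := le_min (hw0 ω) (by positivity)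
      simp only [hrMdef]
      linarith
  set X : Ω → ℝ≥0∞ := fun ω => limsup (eAv T w ω) atTop with hXdef
  set Y : Ω → ℝ≥0∞ := fun ω => liminf (eAv T w ω) atTop with hYdef
  have hXm : Measurable X := meas_limsup_eAv hT.measurable hw
  have hYm : Measurable Y := meas_liminf_eAv hT.measurable hw
  have hXfin : ∫⁻ ω, X ω ∂μ ≠ ⊤ :=
    ne_top_of_le_ne_top hwint (KW_upper hT hw hw0)
  -- a.e. pointwise oscillation bound
  have haeM : ∀ᵐ ω ∂μ, ∀ M : ℕ,
      X ω ≤ Y ω + limsup (eAv T (rM M) ω) atTop := by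
    rw [MeasureTheory.ae_all_iff]
    intro M
    filter_upwards [conv_bounded hT (hwMm M) (hwM0 M) (hwMC M) (by positivity)]
      with ω hconv
    have h1 : X ω ≤ limsup (eAv T (wM M) ω) atTop + limsup (eAv T (rM M) ω) atTop := by
      have : eAv T w ω = fun n => eAv T (wM M) ω n + eAv T (rM M) ω n :=
        funext (hsplit M ω)
      rw [hXdef]
      simp only [this]
      exact limsup_add_le' _ _
    have h2 : limsup (eAv T (wM M) ω) atTop ≤ Y ω := by
      rw [hconv]
      have hev : ∀ᶠ n in atTop, eAv T (wM M) ω n ≤ eAv T w ω n :=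
        Filter.Eventually.of_forall fun n => by
          rw [hsplit M ω n]; exact le_self_add
      exact liminf_le_liminf hev
    calc X ω ≤ limsup (eAv T (wM M) ω) atTop + limsup (eAv T (rM M) ω) atTop := h1
      _ ≤ Y ω + limsup (eAv T (rM M) ω) atTop := add_le_add_left h2 _
  have hXY : ∫⁻ ω, X ω ∂μ ≤ ∫⁻ ω, Y ω ∂μ := by
    have hstep : ∀ M : ℕ, ∫⁻ ω, X ω ∂μ
        ≤ ∫⁻ ω, Y ω ∂μ + ∫⁻ ω, ENNReal.ofReal (rM M ω) ∂μ := by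
      intro M
      have h1 : ∫⁻ ω, X ω ∂μ ≤ ∫⁻ ω, (Y ω + limsup (eAv T (rM M) ω) atTop) ∂μ := by
        apply lintegral_mono_ae
        filter_upwards [haeM] with ω hω
        exact hω M
      have h2 : ∫⁻ ω, (Y ω + limsup (eAv T (rM M) ω) atTop) ∂μ
          = ∫⁻ ω, Y ω ∂μ + ∫⁻ ω, limsup (eAv T (rM M) ω) atTop ∂μ :=
        lintegral_add_left hYm _
      have h3 : ∫⁻ ω, limsup (eAv T (rM M) ω) atTop ∂μ
          ≤ ∫⁻ ω, ENNReal.ofReal (rM M ω) ∂μ := KW_upper hT (hrMm M) (hrM0 M)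
      calc ∫⁻ ω, X ω ∂μ ≤ ∫⁻ ω, Y ω ∂μ + ∫⁻ ω, limsup (eAv T (rM M) ω) atTop ∂μ :=
          h1.trans h2.le
        _ ≤ ∫⁻ ω, Y ω ∂μ + ∫⁻ ω, ENNReal.ofReal (rM M ω) ∂μ := add_le_add_right h3 _
    have hlim : Tendsto (fun M : ℕ => ∫⁻ ω, Y ω ∂μ + ∫⁻ ω, ENNReal.ofReal (rM M ω) ∂μ)
        atTop (𝓝 (∫⁻ ω, Y ω ∂μ)) := by
      have := Tendsto.const_add (∫⁻ ω, Y ω ∂μ) hrint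
      simpa using this
    exact ge_of_tendsto hlim (Filter.Eventually.of_forall hstep)
  have hfinY : ∫⁻ ω, Y ω ∂μ ≠ ⊤ :=
    ne_top_of_le_ne_top hXfin (lintegral_mono fun ω => liminf_le_limsup)
  have hae1 : ∀ᵐ ω ∂μ, X ω = Y ω :=
    ae_eq_of_lintegral_le hXm hYm (fun ω => liminf_le_limsup) hXY hfinY
  have hae2 : ∀ᵐ ω ∂μ, X ω ≠ ⊤ := by
    filter_upwards [ae_lt_top hXm hXfin] with ω hω
    exact hω.ne
  filter_upwards [hae1, hae2] with ω h1 h2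
  exact ⟨h1, h2⟩

/-- Real-valued a.e. convergence of Birkhoff averages for integrable functions. -/
lemma conv_L1_real (hT : MeasurePreserving T μ μ) {w : Ω → ℝ} (hw : Measurable w)
    (hw0 : ∀ ω, 0 ≤ w ω) (hwint : ∫⁻ ω, ENNReal.ofReal (w ω) ∂μ ≠ ⊤) :
    ∀ᵐ ω ∂μ, Tendsto (fun n : ℕ => (n:ℝ)⁻¹ * birkhoffSum T w n ω) atTop
      (𝓝 ((limsup (eAv T w ω) atTop).toReal)) := by
  filter_upwards [conv_L1 hT hw hw0 hwint] with ω hω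
  obtain ⟨heq, hfin⟩ := hω
  have h1 : Tendsto (eAv T w ω) atTop (𝓝 (limsup (eAv T w ω) atTop)) :=
    tendsto_of_liminf_eq_limsup heq.symm rfl
  have h2 : Tendsto (fun n => (eAv T w ω n).toReal) atTop
      (𝓝 ((limsup (eAv T w ω) atTop).toReal)) :=
    (ENNReal.tendsto_toReal hfin).comp h1
  apply h2.congr
  intro n
  simp [eAv, ENNReal.toReal_ofReal (av_nonneg hw0 n ω), birkhoffSum_nonneg hw0 n ω]

end Conv

/-- Pointwise: if limsup = liminf (finite) of the `ℝ≥0∞` averages, the real averages converge. -/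
lemma tendsto_av_of_eq {T : Ω → Ω} {f : Ω → ℝ} (hf0 : ∀ ω, 0 ≤ f ω) {ω : Ω}
    (heq : limsup (eAv T f ω) atTop = liminf (eAv T f ω) atTop)
    (hfin : limsup (eAv T f ω) atTop ≠ ⊤) :
    Tendsto (fun n : ℕ => (n:ℝ)⁻¹ * birkhoffSum T f n ω) atTop
      (𝓝 ((limsup (eAv T f ω) atTop).toReal)) := by
  have h1 : Tendsto (eAv T f ω) atTop (𝓝 (limsup (eAv T f ω) atTop)) :=
    tendsto_of_liminf_eq_limsup heq.symm rfl
  have h2 := (ENNReal.tendsto_toReal hfin).comp h1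
  apply h2.congr
  intro n
  simp [eAv, ENNReal.toReal_ofReal (av_nonneg hf0 n ω), birkhoffSum_nonneg hf0 n ω]

lemma tendsto_atTop_av_of_liminf_top {T : Ω → Ω} {f : Ω → ℝ} {ω : Ω}
    (hinf : liminf (eAv T f ω) atTop = ⊤) :
    Tendsto (fun n : ℕ => (n:ℝ)⁻¹ * birkhoffSum T f n ω) atTop atTop := by
  rw [tendsto_atTop]
  intro b
  have hR : ENNReal.ofReal (max b 0) < liminf (eAv T f ω) atTop := by
    rw [hinf]; exact ENNReal.ofReal_lt_top
  filter_upwards [eventually_lt_of_lt_liminf hR] with n hn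
  have h2 : max b 0 < (n:ℝ)⁻¹ * birkhoffSum T f n ω :=
    (ENNReal.ofReal_lt_ofReal_iff_of_nonneg (le_max_right b 0)).mp hn
  calc b ≤ max b 0 := le_max_left _ _
    _ ≤ (n:ℝ)⁻¹ * birkhoffSum T f n ω := h2.le

/-- Exact shift invariance for `limsup` of `h (Tⁿ ω) / n`. -/
lemma limsup_shift (v : ℕ → ℝ) (hv : ∀ n, 0 ≤ v n) :
    limsup (fun n : ℕ => ENNReal.ofReal ((n:ℝ)⁻¹ * v (n+1))) atTop
      = limsup (fun n : ℕ => ENNReal.ofReal ((n:ℝ)⁻¹ * v n)) atTop := by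
  set a : ℕ → ℝ≥0∞ := fun k => ENNReal.ofReal ((k:ℝ)⁻¹ * v k) with hadef
  have main : limsup (fun n : ℕ => ENNReal.ofReal ((n:ℝ)⁻¹ * v (n+1))) atTop
      = limsup (fun n : ℕ => a (n+1)) atTop := by
    have hsq := squeeze_limsup_liminf (fun n : ℕ => a (n+1))
      (fun n : ℕ => ENNReal.ofReal ((n:ℝ)⁻¹ * v (n+1))) ?_ ?_
    · exact hsq.1
    · intro δ h0 htop
      have hd : (0:ℝ) < δ.toReal := ENNReal.toReal_pos h0.ne' htop.ne
      have hev : ∀ᶠ n : ℕ in atTop, ((n:ℝ)+1) * (n:ℝ)⁻¹ ≤ 1 + δ.toReal := by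
        have h1 : Tendsto (fun n : ℕ => ((n:ℝ)+1) * (n:ℝ)⁻¹) atTop (𝓝 1) := by
          have h2 : Tendsto (fun n : ℕ => 1 + (n:ℝ)⁻¹) atTop (𝓝 (1 + 0)) :=
            tendsto_const_nhds.add (tendsto_inv_atTop_zero.comp tendsto_natCast_atTop_atTop)
          simp only [add_zero] at h2
          refine h2.congr' ?_
          filter_upwards [eventually_ge_atTop 1] with n hn
          have hn0 : (n:ℝ) ≠ 0 := by
            have : (1:ℝ) ≤ (n:ℝ) := by exact_mod_cast hn
            linarith
          field_simp
        exact h1.eventually_le_const (by linarith)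
      filter_upwards [hev, eventually_ge_atTop 1] with n hn hn1
      have hn0 : (0:ℝ) < (n:ℝ) := by exact_mod_cast hn1
      have hfac : (n:ℝ)⁻¹ * v (n+1) = (((n:ℝ)+1) * (n:ℝ)⁻¹) * ((((n+1):ℕ):ℝ)⁻¹ * v (n+1)) := by
        have hc : (((n+1):ℕ):ℝ) = (n:ℝ)+1 := by push_cast; ring
        rw [hc]
        have hn10 : (0:ℝ) < (n:ℝ)+1 := by linarith
        field_simp
      calc ENNReal.ofReal ((n:ℝ)⁻¹ * v (n+1))
          = ENNReal.ofReal (((n:ℝ)+1) * (n:ℝ)⁻¹) * a (n+1) := by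
            rw [hfac, ENNReal.ofReal_mul (by positivity)]
        _ ≤ (1 + δ) * a (n+1) := by
            gcongr
            calc ENNReal.ofReal (((n:ℝ)+1) * (n:ℝ)⁻¹) ≤ ENNReal.ofReal (1 + δ.toReal) :=
                ENNReal.ofReal_le_ofReal hn
              _ = 1 + δ := by
                rw [ENNReal.ofReal_add zero_le_one ENNReal.toReal_nonneg,
                  ENNReal.ofReal_one, ENNReal.ofReal_toReal htop.ne]
        _ = a (n+1) * (1 + δ) := mul_comm _ _
        _ ≤ a (n+1) * (1 + δ) + δ := le_self_add
    · intro δ h0 htop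
      filter_upwards [eventually_ge_atTop 1] with n hn1
      have hn0 : (0:ℝ) < (n:ℝ) := by exact_mod_cast hn1
      have hle : (((n+1):ℕ):ℝ)⁻¹ * v (n+1) ≤ (n:ℝ)⁻¹ * v (n+1) := by
        have hc : (((n+1):ℕ):ℝ) = (n:ℝ)+1 := by push_cast; ring
        rw [hc]
        apply mul_le_mul_of_nonneg_right _ (hv (n+1))
        apply inv_anti₀ hn0
        linarith
      calc a (n+1) ≤ ENNReal.ofReal ((n:ℝ)⁻¹ * v (n+1)) := ENNReal.ofReal_le_ofReal hle
        _ ≤ ENNReal.ofReal ((n:ℝ)⁻¹ * v (n+1)) * (1 + δ) + δ := by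
            calc ENNReal.ofReal ((n:ℝ)⁻¹ * v (n+1))
                = ENNReal.ofReal ((n:ℝ)⁻¹ * v (n+1)) * 1 := (mul_one _).symm
              _ ≤ ENNReal.ofReal ((n:ℝ)⁻¹ * v (n+1)) * (1 + δ) :=
                  mul_le_mul_right le_self_add _
              _ ≤ ENNReal.ofReal ((n:ℝ)⁻¹ * v (n+1)) * (1 + δ) + δ := le_self_add
  rw [main]
  exact Filter.limsup_nat_add a 1

section Main

variable {m : MeasurableSpace Ω} {μ : Measure Ω} [IsProbabilityMeasure μ] {T : Ω → Ω}

theorem main_result (hT : MeasurePreserving T μ μ) {h : Ω → ℝ} (hmeas : Measurable h)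
    (hpos : ∀ ω, 0 ≤ h ω)
    (hint : Integrable (fun ω => max (h ω - h (T ω)) 0) μ) :
    ∀ᵐ ω ∂μ, Tendsto (fun n : ℕ => (n : ℝ)⁻¹ * h (T^[n] ω)) atTop (𝓝 0) := by
  classical
  set p : Ω → ℝ := fun ω => max (h ω - h (T ω)) 0 with hpdef
  set q : Ω → ℝ := fun ω => max (h (T ω) - h ω) 0 with hqdef
  have hTm : Measurable T := hT.measurable
  have hpm : Measurable p := (hmeas.sub (hmeas.comp hTm)).max measurable_const
  have hqm : Measurable q := ((hmeas.comp hTm).sub hmeas).max measurable_const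
  have hp0 : ∀ ω, 0 ≤ p ω := fun ω => le_max_right _ _
  have hq0 : ∀ ω, 0 ≤ q ω := fun ω => le_max_right _ _
  have hpint : ∫⁻ ω, ENNReal.ofReal (p ω) ∂μ ≠ ⊤ := hint.lintegral_lt_top.ne
  have hiden : ∀ ω (n : ℕ), h (T^[n] ω)
      = h ω - birkhoffSum T p n ω + birkhoffSum T q n ω := by
    intro ω n
    induction n with
    | zero => simp
    | succ n IH =>
      have hone : ∀ y, h (T y) = h y - p y + q y := by
        intro y
        rcases le_total (h (T y)) (h y) with hc | hc
        · rw [hpdef, hqdef]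
          simp only
          rw [max_eq_left (by linarith), max_eq_right (by linarith)]
          ring
        · rw [hpdef, hqdef]
          simp only
          rw [max_eq_right (by linarith), max_eq_left (by linarith)]
          ring
      rw [Function.iterate_succ_apply', hone, IH, birkhoffSum_succ, birkhoffSum_succ]
      ring
  set lsh : Ω → ℝ≥0∞ := fun ω =>
    limsup (fun n : ℕ => ENNReal.ofReal ((n:ℝ)⁻¹ * h (T^[n] ω))) atTop with hlshdef
  have hlshm : Measurable lsh := Measurable.limsup fun n =>
    ENNReal.measurable_ofReal.comp ((hmeas.comp (hTm.iterate n)).const_mul _)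
  have hlshT : ∀ ω, lsh (T ω) = lsh ω := by
    intro ω
    have hv := limsup_shift (fun n => h (T^[n] ω)) (fun n => hpos _)
    have he : (fun n : ℕ => ENNReal.ofReal ((n:ℝ)⁻¹ * h (T^[n] (T ω))))
        = fun n : ℕ => ENNReal.ofReal ((n:ℝ)⁻¹ * h (T^[n+1] ω)) := by
      funext n
      rw [← Function.iterate_succ_apply]
    rw [hlshdef]
    simp only [he]
    exact hv
  set qM : ℕ → Ω → ℝ := fun M ω => min (q ω) (M:ℝ) with hqMdef
  have hqMm : ∀ M, Measurable (qM M) := fun M => hqm.min measurable_const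
  have hqM0 : ∀ M ω, 0 ≤ qM M ω := fun M ω => le_min (hq0 ω) (by positivity)
  have hqMC : ∀ M ω, qM M ω ≤ (M:ℝ) := fun M ω => min_le_right _ _
  set G : Ω → ℝ≥0∞ := fun ω => ⨆ M : ℕ, limsup (eAv T (qM M) ω) atTop with hGdef
  have hGm : Measurable G := Measurable.iSup fun M => meas_limsup_eAv hTm (hqMm M)
  have hGT : ∀ ω, G (T ω) = G ω := fun ω => by
    rw [hGdef]
    simp only
    congr 1
    funext M
    exact (eAv_comp T (qM M) (hqM0 M) ω).1
  set B : ℕ → Set Ω := fun c => {ω | G ω ≤ (c:ℝ≥0∞)} with hBdef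
  have hBm : ∀ c, MeasurableSet (B c) := fun c => measurableSet_le hGm measurable_const
  have hBiter : ∀ (c k : ℕ) ω, (T^[k] ω ∈ B c) ↔ (ω ∈ B c) := by
    intro c k ω
    simp [hBdef, iter_inv hGT k ω]
  have hBqint : ∀ c : ℕ,
      ∫⁻ ω, ENNReal.ofReal (if ω ∈ B c then q ω else 0) ∂μ ≤ (c:ℝ≥0∞) := by
    intro c
    have hstep : ∀ M : ℕ,
        ∫⁻ ω, ENNReal.ofReal (if ω ∈ B c then qM M ω else 0) ∂μ ≤ (c:ℝ≥0∞) := by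
      intro M
      set v : Ω → ℝ := fun ω => if ω ∈ B c then qM M ω else 0 with hvdef
      have hvm : Measurable v := Measurable.ite (hBm c) (hqMm M) measurable_const
      have hv0 : ∀ ω, 0 ≤ v ω := fun ω => by
        by_cases hc : ω ∈ B c <;> simp [hvdef, hc, hqM0 M ω]
      have hvC : ∀ ω, v ω ≤ (M:ℝ) := fun ω => by
        by_cases hc : ω ∈ B c <;> simp [hvdef, hc, hqMC M ω] <;> positivity
      have hKW := KW_lower hT hvm hv0 hvC (by positivity)
      have hlim : ∀ ω, liminf (eAv T v ω) atTop ≤ (c:ℝ≥0∞) := by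
        intro ω
        by_cases hc : ω ∈ B c
        · have he : eAv T v ω = eAv T (qM M) ω := by
            funext n
            have hsum : birkhoffSum T v n ω = birkhoffSum T (qM M) n ω :=
              Finset.sum_congr rfl fun k _ => by
                have hmem := (hBiter c k ω).mpr hc
                simp [hvdef, hmem]
            simp [eAv, hsum]
          rw [he]
          calc liminf (eAv T (qM M) ω) atTop ≤ limsup (eAv T (qM M) ω) atTop :=
              liminf_le_limsup
            _ ≤ G ω := le_iSup (fun M' => limsup (eAv T (qM M') ω) atTop) M
            _ ≤ (c:ℝ≥0∞) := hc
        · have he : ∀ n, eAv T v ω n = 0 := by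
            intro n
            have hzero : birkhoffSum T v n ω = 0 :=
              Finset.sum_eq_zero fun k _ => by
                have hmem : ¬ (T^[k] ω ∈ B c) := fun hm => hc ((hBiter c k ω).mp hm)
                simp [hvdef, hmem]
            simp [eAv, hzero]
          have heq0 : liminf (eAv T v ω) atTop = 0 := by
            have hfe : eAv T v ω = fun _ => 0 := funext he
            rw [hfe]
            simp
          rw [heq0]
          exact zero_le
      calc ∫⁻ ω, ENNReal.ofReal (v ω) ∂μ ≤ ∫⁻ ω, liminf (eAv T v ω) atTop ∂μ := hKW
        _ ≤ ∫⁻ _, (c:ℝ≥0∞) ∂μ := lintegral_mono hlim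
        _ = (c:ℝ≥0∞) := by simp [measure_univ]
    have hmono : Monotone (fun M : ℕ =>
        fun ω => ENNReal.ofReal (if ω ∈ B c then qM M ω else 0)) := by
      intro M M' hMM' ω
      by_cases hc : ω ∈ B c <;> simp only [hc, if_pos, if_neg, if_true, if_false]
      · apply ENNReal.ofReal_le_ofReal
        exact min_le_min le_rfl (by exact_mod_cast hMM')
      · exact le_rfl
    have hsupeq : ∀ ω, ENNReal.ofReal (if ω ∈ B c then q ω else 0)
        = ⨆ M : ℕ, ENNReal.ofReal (if ω ∈ B c then qM M ω else 0) := by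
      intro ω
      by_cases hc : ω ∈ B c
      · simp only [if_pos hc]
        apply le_antisymm
        · obtain ⟨M, hM⟩ := exists_nat_gt (q ω)
          have : ENNReal.ofReal (q ω) = ENNReal.ofReal (qM M ω) := by
            rw [hqMdef]
            simp only
            rw [min_eq_left hM.le]
          rw [this]
          exact le_iSup (fun M' : ℕ => ENNReal.ofReal (qM M' ω)) M
        · exact iSup_le fun M => ENNReal.ofReal_le_ofReal (min_le_left _ _)
      · simp [hc]
    calc ∫⁻ ω, ENNReal.ofReal (if ω ∈ B c then q ω else 0) ∂μ
        = ∫⁻ ω, ⨆ M : ℕ, ENNReal.ofReal (if ω ∈ B c then qM M ω else 0) ∂μ := by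
          simp only [hsupeq]
      _ = ⨆ M : ℕ, ∫⁻ ω, ENNReal.ofReal (if ω ∈ B c then qM M ω else 0) ∂μ :=
          lintegral_iSup (fun M => ENNReal.measurable_ofReal.comp
            (Measurable.ite (hBm c) (hqMm M) measurable_const)) hmono
      _ ≤ (c:ℝ≥0∞) := iSup_le hstep
  have hBconv : ∀ c : ℕ, ∀ᵐ ω ∂μ, ω ∈ B c →
      (limsup (eAv T q ω) atTop = liminf (eAv T q ω) atTop
        ∧ limsup (eAv T q ω) atTop ≠ ⊤) := by
    intro c
    set wc : Ω → ℝ := fun ω => if ω ∈ B c then q ω else 0 with hwcdef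
    have hwcm : Measurable wc := Measurable.ite (hBm c) hqm measurable_const
    have hwc0 : ∀ ω, 0 ≤ wc ω := fun ω => by
      by_cases hc : ω ∈ B c <;> simp [hwcdef, hc, hq0 ω]
    have hwcint : ∫⁻ ω, ENNReal.ofReal (wc ω) ∂μ ≠ ⊤ :=
      ne_top_of_le_ne_top (by simp) (hBqint c)
    filter_upwards [conv_L1 hT hwcm hwc0 hwcint] with ω hω hmem
    have he : eAv T wc ω = eAv T q ω := by
      funext n
      have hsum : birkhoffSum T wc n ω = birkhoffSum T q n ω :=
        Finset.sum_congr rfl fun k _ => by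
          have hm := (hBiter c k ω).mpr hmem
          simp [hwcdef, hm]
      simp [eAv, hsum]
    rw [← he]
    exact hω
  have hGle : ∀ᵐ ω ∂μ, G ω ≤ liminf (eAv T q ω) atTop := by
    have hall : ∀ᵐ ω ∂μ, ∀ M : ℕ,
        limsup (eAv T (qM M) ω) atTop = liminf (eAv T (qM M) ω) atTop := by
      rw [ae_all_iff]
      intro M
      exact conv_bounded hT (hqMm M) (hqM0 M) (hqMC M) (by positivity)
    filter_upwards [hall] with ω hω
    rw [hGdef]
    apply iSup_le
    intro M
    rw [hω M]
    have hev : ∀ᶠ n in atTop, eAv T (qM M) ω n ≤ eAv T q ω n := by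
      apply Filter.Eventually.of_forall
      intro n
      apply ENNReal.ofReal_le_ofReal
      apply mul_le_mul_of_nonneg_left _ (by positivity)
      exact Finset.sum_le_sum fun k _ => min_le_left _ _
    exact liminf_le_liminf hev
  have hPQ : ∀ᵐ ω ∂μ,
      (∃ lr : ℝ, 0 ≤ lr ∧
        Tendsto (fun n : ℕ => (n:ℝ)⁻¹ * h (T^[n] ω)) atTop (𝓝 lr) ∧
        lsh ω = ENNReal.ofReal lr)
      ∨ (Tendsto (fun n : ℕ => h (T^[n] ω)) atTop atTop ∧ lsh ω = ⊤) := by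
    have hconvp := conv_L1_real hT hpm hp0 hpint
    have hBall : ∀ᵐ ω ∂μ, ∀ c : ℕ, ω ∈ B c →
        (limsup (eAv T q ω) atTop = liminf (eAv T q ω) atTop
          ∧ limsup (eAv T q ω) atTop ≠ ⊤) := ae_all_iff.mpr hBconv
    filter_upwards [hconvp, hBall, hGle] with ω hp hB hG'
    have hzero : Tendsto (fun n : ℕ => (n:ℝ)⁻¹ * h ω) atTop (𝓝 0) := by
      have h1 := ((tendsto_inv_atTop_zero (𝕜 := ℝ)).comp
        tendsto_natCast_atTop_atTop).mul_const (h ω)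
      simpa using h1
    have hu : ∀ n : ℕ, (n:ℝ)⁻¹ * h (T^[n] ω)
        = ((n:ℝ)⁻¹ * h ω - (n:ℝ)⁻¹ * birkhoffSum T p n ω)
          + (n:ℝ)⁻¹ * birkhoffSum T q n ω := by
      intro n
      rw [hiden ω n]
      ring
    rcases eq_top_or_lt_top (G ω) with hGtop | hGlt
    · right
      have hqtop : liminf (eAv T q ω) atTop = ⊤ := top_le_iff.mp (hGtop ▸ hG')
      have hqat : Tendsto (fun n : ℕ => (n:ℝ)⁻¹ * birkhoffSum T q n ω) atTop atTop :=
        tendsto_atTop_av_of_liminf_top hqtop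
      have hfirst : Tendsto
          (fun n : ℕ => (n:ℝ)⁻¹ * h ω - (n:ℝ)⁻¹ * birkhoffSum T p n ω)
          atTop (𝓝 (0 - (limsup (eAv T p ω) atTop).toReal)) := hzero.sub hp
      have huat : Tendsto (fun n : ℕ => (n:ℝ)⁻¹ * h (T^[n] ω)) atTop atTop := by
        apply (hfirst.add_atTop hqat).congr
        intro n
        exact (hu n).symm
      have hhat : Tendsto (fun n : ℕ => h (T^[n] ω)) atTop atTop := by
        apply tendsto_atTop_mono' atTop _ huat
        filter_upwards [eventually_ge_atTop 1] with n hn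
        have hn1 : (1:ℝ) ≤ (n:ℝ) := by exact_mod_cast hn
        have hn0 : (0:ℝ) < (n:ℝ) := by linarith
        have hx : 0 ≤ (n:ℝ)⁻¹ * h (T^[n] ω) := mul_nonneg (by positivity) (hpos _)
        calc (n:ℝ)⁻¹ * h (T^[n] ω) ≤ (n:ℝ) * ((n:ℝ)⁻¹ * h (T^[n] ω)) :=
            le_mul_of_one_le_left hx hn1
          _ = h (T^[n] ω) := by field_simp
      refine ⟨hhat, ?_⟩
      have htend : Tendsto (fun n : ℕ => ENNReal.ofReal ((n:ℝ)⁻¹ * h (T^[n] ω)))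
          atTop (𝓝 ⊤) := ENNReal.tendsto_ofReal_atTop.comp huat
      exact htend.limsup_eq
    · left
      obtain ⟨c, hc⟩ := ENNReal.exists_nat_gt hGlt.ne
      have hmem : ω ∈ B c := le_of_lt hc
      obtain ⟨heq, hfin⟩ := hB c hmem
      have hq' := tendsto_av_of_eq hq0 heq hfin
      have hut : Tendsto (fun n : ℕ => (n:ℝ)⁻¹ * h (T^[n] ω)) atTop
          (𝓝 ((0 - (limsup (eAv T p ω) atTop).toReal)
            + (limsup (eAv T q ω) atTop).toReal)) := by
        apply ((hzero.sub hp).add hq').congr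
        intro n
        exact (hu n).symm
      refine ⟨_, ?_, hut, ?_⟩
      · apply ge_of_tendsto hut
        apply Filter.Eventually.of_forall
        intro n
        exact mul_nonneg (by positivity) (hpos _)
      · have htend : Tendsto (fun n : ℕ => ENNReal.ofReal ((n:ℝ)⁻¹ * h (T^[n] ω)))
            atTop (𝓝 (ENNReal.ofReal ((0 - (limsup (eAv T p ω) atTop).toReal)
              + (limsup (eAv T q ω) atTop).toReal))) :=
          (ENNReal.continuous_ofReal.tendsto _).comp hut
        exact htend.limsup_eq
  have hAnull : ∀ ε : ℝ, 0 < ε → μ {ω | ENNReal.ofReal ε < lsh ω} = 0 := by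
    intro ε hε
    set A : Set Ω := {ω | ENNReal.ofReal ε < lsh ω} with hAdef
    have hAm : MeasurableSet A := measurableSet_lt measurable_const hlshm
    have hAiter : ∀ k : ℕ, T^[k] ⁻¹' A = A := by
      intro k
      ext ω
      simp [hAdef, iter_inv hlshT k ω]
    have htop : ∀ᵐ ω ∂μ, ω ∈ A → Tendsto (fun n : ℕ => h (T^[n] ω)) atTop atTop := by
      filter_upwards [hPQ] with ω hω hmem
      rcases hω with ⟨lr, hl0, hut, hlsheq⟩ | ⟨hat, _⟩
      · have hεl : ε < lr :=
          (ENNReal.ofReal_lt_ofReal_iff_of_nonneg hε.le).mp (hlsheq ▸ hmem)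
        have hl2 : 0 < lr / 2 := by linarith
        have hev2 : ∀ᶠ n : ℕ in atTop, lr/2 ≤ (n:ℝ)⁻¹ * h (T^[n] ω) :=
          hut.eventually_const_le (by linarith)
        have hev : ∀ᶠ n : ℕ in atTop, (n:ℝ) * (lr/2) ≤ h (T^[n] ω) := by
          filter_upwards [hev2, eventually_ge_atTop 1] with n h2 hn1
          have hn0 : (0:ℝ) < (n:ℝ) := by exact_mod_cast hn1
          calc (n:ℝ) * (lr/2) ≤ (n:ℝ) * ((n:ℝ)⁻¹ * h (T^[n] ω)) :=
              mul_le_mul_of_nonneg_left h2 hn0.le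
            _ = h (T^[n] ω) := by field_simp
        exact tendsto_atTop_mono' atTop hev
          (tendsto_natCast_atTop_atTop.atTop_mul_const hl2)
      · exact hat
    have hM0 : ∀ M : ℕ, μ (A ∩ {ω | h ω ≤ (M:ℝ)}) = 0 := by
      intro M
      have hmeasM : MeasurableSet {ω | h ω ≤ (M:ℝ)} :=
        measurableSet_le hmeas measurable_const
      have hpre : ∀ n : ℕ, μ (A ∩ {ω | h ω ≤ (M:ℝ)})
          = μ (A ∩ {ω | h (T^[n] ω) ≤ (M:ℝ)}) := by
        intro n
        have h1 : T^[n] ⁻¹' (A ∩ {ω | h ω ≤ (M:ℝ)})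
            = A ∩ {ω | h (T^[n] ω) ≤ (M:ℝ)} := by
          rw [Set.preimage_inter, hAiter n]
          rfl
        rw [← h1, (hT.iterate n).measure_preimage (hAm.inter hmeasM).nullMeasurableSet]
      have hmeasn : ∀ n : ℕ, MeasurableSet (A ∩ {ω | h (T^[n] ω) ≤ (M:ℝ)}) :=
        fun n => hAm.inter (measurableSet_le (hmeas.comp (hTm.iterate n)) measurable_const)
      have hlim : Tendsto (fun n : ℕ => μ (A ∩ {ω | h (T^[n] ω) ≤ (M:ℝ)}))
          atTop (𝓝 0) := by
        have heqInd : ∀ n : ℕ, μ (A ∩ {ω | h (T^[n] ω) ≤ (M:ℝ)})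
            = ∫⁻ ω, (A ∩ {ω' | h (T^[n] ω') ≤ (M:ℝ)}).indicator
                (fun _ => (1:ℝ≥0∞)) ω ∂μ := by
          intro n
          rw [lintegral_indicator (hmeasn n), setLIntegral_const, one_mul]
        simp only [heqInd]
        have h00 : (0:ℝ≥0∞) = ∫⁻ _, (0:ℝ≥0∞) ∂μ := by simp
        rw [h00]
        apply tendsto_lintegral_of_dominated_convergence (fun _ => (1:ℝ≥0∞))
          (fun n => measurable_const.indicator (hmeasn n))
        · intro n
          apply Filter.Eventually.of_forall
          intro ω
          by_cases hmem : ω ∈ A ∩ {ω' | h (T^[n] ω') ≤ (M:ℝ)} <;>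
            simp [Set.indicator_apply, hmem]
        · simp [measure_univ]
        · filter_upwards [htop] with ω hω
          by_cases hmem : ω ∈ A
          · have hat := hω hmem
            have hev : ∀ᶠ n : ℕ in atTop, (M:ℝ) < h (T^[n] ω) :=
              hat.eventually_gt_atTop (M:ℝ)
            apply Tendsto.congr' _ (tendsto_const_nhds (x := (0:ℝ≥0∞)))
            filter_upwards [hev] with n hn
            have : ω ∉ A ∩ {ω' | h (T^[n] ω') ≤ (M:ℝ)} := by
              intro hcon
              exact absurd hcon.2 (not_le.mpr hn)
            simp [Set.indicator_apply, this]
          · apply Tendsto.congr' _ (tendsto_const_nhds (x := (0:ℝ≥0∞)))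
            apply Filter.Eventually.of_forall
            intro n
            have : ω ∉ A ∩ {ω' | h (T^[n] ω') ≤ (M:ℝ)} := fun hcon => hmem hcon.1
            simp [Set.indicator_apply, this]
      have hconst : (fun _ : ℕ => μ (A ∩ {ω | h ω ≤ (M:ℝ)}))
          = fun n : ℕ => μ (A ∩ {ω | h (T^[n] ω) ≤ (M:ℝ)}) := funext fun n => hpre n
      have : Tendsto (fun _ : ℕ => μ (A ∩ {ω | h ω ≤ (M:ℝ)})) atTop (𝓝 0) := by
        rw [hconst]
        exact hlim
      exact tendsto_nhds_unique tendsto_const_nhds this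
    apply le_antisymm _ zero_le
    have hcover : A ⊆ ⋃ M : ℕ, (A ∩ {ω | h ω ≤ (M:ℝ)}) := by
      intro ω hω
      obtain ⟨M, hM⟩ := exists_nat_gt (h ω)
      exact Set.mem_iUnion.mpr ⟨M, hω, hM.le⟩
    calc μ A ≤ μ (⋃ M : ℕ, (A ∩ {ω | h ω ≤ (M:ℝ)})) := measure_mono hcover
      _ = 0 := measure_iUnion_null hM0
  have hlshzero : ∀ᵐ ω ∂μ, lsh ω = 0 := by
    have hall : ∀ᵐ ω ∂μ, ∀ k : ℕ, ¬ (ENNReal.ofReal (1/((k:ℝ)+1)) < lsh ω) := by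
      rw [ae_all_iff]
      intro k
      have hnull := hAnull (1/((k:ℝ)+1)) (by positivity)
      exact measure_eq_zero_iff_ae_notMem.mp hnull
    filter_upwards [hall] with ω hω
    have hle : ∀ k : ℕ, lsh ω ≤ ENNReal.ofReal (1/((k:ℝ)+1)) := fun k => not_lt.mp (hω k)
    have hlim0 : Tendsto (fun k : ℕ => ENNReal.ofReal (1/((k:ℝ)+1))) atTop (𝓝 0) := by
      have h1 := (ENNReal.continuous_ofReal.tendsto 0).comp
        tendsto_one_div_add_atTop_nhds_zero_nat
      simpa [Function.comp_def] using h1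
    exact le_antisymm (ge_of_tendsto hlim0 (Filter.Eventually.of_forall hle)) zero_le
  filter_upwards [hPQ, hlshzero] with ω hω h0
  rcases hω with ⟨lr, hl0, hut, hlsheq⟩ | ⟨hat, htopeq⟩
  · have hlr : lr = 0 := by
      have h1 : ENNReal.ofReal lr = 0 := hlsheq ▸ h0
      have h2 := ENNReal.ofReal_eq_zero.mp h1
      linarith
    rw [hlr] at hut
    exact hut
  · rw [htopeq] at h0
    exact absurd h0 (by simp)

end Main
end
end KWProof

theorem stmt1 {Ω : Type*} [MeasurableSpace Ω] (μ : Measure Ω) [IsProbabilityMeasure μ]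
    (T : Ω → Ω) (hT : MeasurePreserving T μ μ)
    (h : Ω → ℝ) (hmeas : Measurable h) (hpos : ∀ ω, 0 ≤ h ω)
    (hint : Integrable (fun ω => max (h ω - h (T ω)) 0) μ) :
    ∀ᵐ ω ∂μ, Tendsto (fun n : ℕ => (n : ℝ)⁻¹ * h (T^[n] ω)) atTop (𝓝 0) :=
  KWProof.main_result hT hmeas hpos hint
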